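/- arXiv:0807.3704 — 7 statements merged into one kernel-verified Lean document; each statement's English description precedes it below -/
import Mathlib

section
/- The map T(m,n,p) : I(m,n,p) → J(m,n,p) defined by T(m,n,p)(t,s) = (max{m+p, n+s} - t, s) is a well-defined bijection with inverse T(p,n,m), where I(m,n,p) = {(t,s) : |m-n|+k ≤ t ≤ m+n-k, |t-p|+k ≤ s ≤ t+p-k} and J(m,n,p) = {(v,u) : |n-p|+k ≤ v ≤ n+p-k, |m-v|+k ≤ u ≤ m+v-k}. -/
/-- The index set `I(m,n,p)` of Proposition 3.1(1). -/
def Iset (k m n p : ℤ) : Set (ℤ × ℤ) :=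
  {ts | |m - n| + k ≤ ts.1 ∧ ts.1 ≤ m + n - k ∧ |ts.1 - p| + k ≤ ts.2 ∧ ts.2 ≤ ts.1 + p - k}

/-- The index set `J(m,n,p)` of Proposition 3.1(1). -/
def Jset (k m n p : ℤ) : Set (ℤ × ℤ) :=
  {vu | |n - p| + k ≤ vu.1 ∧ vu.1 ≤ n + p - k ∧ |m - vu.1| + k ≤ vu.2 ∧ vu.2 ≤ m + vu.1 - k}

/-- The map `T(m,n,p)(t,s) = (max{m+p, n+s} - t, s)`. -/
def Tmap (m n p : ℤ) (ts : ℤ × ℤ) : ℤ × ℤ := (max (m + p) (n + ts.2) - ts.1, ts.2)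

lemma key (k m n p : ℤ) (hm : k ≤ m) (hn : k ≤ n) (hp : k ≤ p)
    (ts : ℤ × ℤ) (h : ts ∈ Iset k m n p) : Tmap m n p ts ∈ Jset k m n p := by
  obtain ⟨t, s⟩ := ts
  obtain ⟨h1, h2, h3, h4⟩ := h
  simp only [Tmap, Jset, Set.mem_setOf_eq]
  rcases abs_cases (m - n) with ⟨e1, _⟩ | ⟨e1, _⟩ <;>
  rcases abs_cases (t - p) with ⟨e2, _⟩ | ⟨e2, _⟩ <;>
  rcases abs_cases (n - p) with ⟨e3, _⟩ | ⟨e3, _⟩ <;>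
  rcases abs_cases (m - (max (m + p) (n + s) - t)) with ⟨e4, _⟩ | ⟨e4, _⟩ <;>
  simp only [Iset, Set.mem_setOf_eq] at * <;>
  rw [e1] at h1 <;> rw [e2] at h3 <;> rw [e3, e4] <;> omega

lemma swapJ (k m n p : ℤ) : Jset k m n p = Iset k p n m := by
  ext ⟨v, u⟩
  simp only [Jset, Iset, Set.mem_setOf_eq]
  rw [abs_sub_comm n p, abs_sub_comm m v, add_comm n p, add_comm m v]

/-- `T(m,n,p) : I(m,n,p) → J(m,n,p)` is a well-defined bijection with inverse `T(p,n,m)`. -/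
theorem stmt1 (k m n p : ℤ) (hk : 0 ≤ k) (hm : k ≤ m) (hn : k ≤ n) (hp : k ≤ p) :
    (∀ ts ∈ Iset k m n p, Tmap m n p ts ∈ Jset k m n p) ∧
    (∀ ts ∈ Iset k m n p, Tmap p n m (Tmap m n p ts) = ts) ∧
    (∀ vu ∈ Jset k m n p, Tmap p n m vu ∈ Iset k m n p) ∧
    (∀ vu ∈ Jset k m n p, Tmap m n p (Tmap p n m vu) = vu) := by
  refine ⟨key k m n p hm hn hp, ?_, ?_, ?_⟩
  · rintro ⟨t, s⟩ -
    simp [Tmap]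
    omega
  · intro vu hvu
    rw [swapJ] at hvu
    have := key k p n m hp hn hm vu hvu
    rwa [swapJ k p n m] at this
  · rintro ⟨v, u⟩ -
    simp [Tmap]
    omega
end

section
/- Let A be a finite pre-von Neumann algebra with completion H, left and right regular representations λ, ρ, and set M^λ = λ(A)'' and M^ρ = ρ(A)''. Then M^λ and M^ρ are commutants of each other: (M^λ)' = M^ρ and (M^ρ)' = M^λ. -/
open Filter Topology

set_option linter.unusedSectionVars false

section PreVN

variable {A : Type*} [Ring A] [Algebra ℂ A] [StarRing A]
  {H : Type*} [NormedAddCommGroup H] [InnerProductSpace ℂ H] [CompleteSpace H]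

local notation "⟪" x ", " y "⟫" => @inner ℂ _ _ x y

private theorem dense_ext {ι : A →ₗ[ℂ] H} (hdense : DenseRange ι) {v w : H}
    (h : ∀ d, ⟪ι d, v⟫ = ⟪ι d, w⟫) : v = w := by
  refine ext_inner_left ℂ fun u => ?_
  have heq : (fun u : H => ⟪u, v⟫) = fun u : H => ⟪u, w⟫ :=
    hdense.equalizer (continuous_id.inner continuous_const)
      (continuous_id.inner continuous_const) (funext h)
  exact congrFun heq u

private theorem approx {ι : A →ₗ[ℂ] H} (hdense : DenseRange ι) (η : H) :
    ∃ c : ℕ → A, Tendsto (fun n => ι (c n)) atTop (𝓝 η) := by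
  have hη : η ∈ closure (Set.range ι) := by
    rw [hdense.closure_range]; trivial
  rw [mem_closure_iff_seq_limit] at hη
  obtain ⟨f, hf1, hf2⟩ := hη
  choose c hc using hf1
  exact ⟨c, by simpa only [hc] using hf2⟩

private theorem norm_star_eq {t : A →ₗ[ℂ] ℂ} {ι : A →ₗ[ℂ] H}
    (hip : ∀ a b : A, (inner ℂ (ι b) (ι a) : ℂ) = t (star b * a))
    (htr : ∀ a b : A, t (a * b) = t (b * a)) (a : A) :
    ‖ι (star a)‖ = ‖ι a‖ := by
  have h : ⟪ι (star a), ι (star a)⟫ = ⟪ι a, ι a⟫ := by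
    rw [hip, hip, star_star]
    exact htr a (star a)
  rw [inner_self_eq_norm_sq_to_K (𝕜 := ℂ), inner_self_eq_norm_sq_to_K (𝕜 := ℂ)] at h
  have h2 : (‖ι (star a)‖ : ℝ) ^ 2 = ‖ι a‖ ^ 2 := by
    exact_mod_cast h
  nlinarith [norm_nonneg (ι (star a)), norm_nonneg (ι a), h2]

private theorem star_limit {t : A →ₗ[ℂ] ℂ} {ι : A →ₗ[ℂ] H}
    (hip : ∀ a b : A, (inner ℂ (ι b) (ι a) : ℂ) = t (star b * a))
    (htr : ∀ a b : A, t (a * b) = t (b * a))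
    {c : ℕ → A} {η : H} (hc : Tendsto (fun n => ι (c n)) atTop (𝓝 η)) :
    ∃ v : H, Tendsto (fun n => ι (star (c n))) atTop (𝓝 v) := by
  have hcauchy : CauchySeq (fun n => ι (c n)) := hc.cauchySeq
  have key : ∀ p q : A, dist (ι (star p)) (ι (star q)) = dist (ι p) (ι q) := by
    intro p q
    rw [dist_eq_norm, dist_eq_norm, ← map_sub, ← map_sub, ← star_sub]
    exact norm_star_eq hip htr _
  have hcs : CauchySeq (fun n => ι (star (c n))) := by
    rw [Metric.cauchySeq_iff] at hcauchy ⊢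
    intro ε hε
    obtain ⟨N, hN⟩ := hcauchy ε hε
    exact ⟨N, fun m hm n hn => by rw [key]; exact hN m hm n hn⟩
  exact cauchySeq_tendsto_of_complete hcs

private theorem lam_inner {t : A →ₗ[ℂ] ℂ} {ι : A →ₗ[ℂ] H}
    (hdense : DenseRange ι)
    (hip : ∀ a b : A, (inner ℂ (ι b) (ι a) : ℂ) = t (star b * a))
    {lam : A → H →L[ℂ] H} (hlam : ∀ a b : A, lam a (ι b) = ι (a * b))
    (b c : A) (v : H) :
    ⟪ι b, lam c v⟫ = ⟪ι (star c * b), v⟫ := by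
  have heq : (fun v : H => ⟪ι b, lam c v⟫) = fun v : H => ⟪ι (star c * b), v⟫ := by
    refine hdense.equalizer (continuous_const.inner (lam c).continuous)
      (continuous_const.inner continuous_id) (funext fun e => ?_)
    show ⟪ι b, lam c (ι e)⟫ = ⟪ι (star c * b), ι e⟫
    rw [hlam, hip, hip]
    congr 1
    simp [star_mul, mul_assoc]
  exact congrFun heq v

private theorem rho_inner {t : A →ₗ[ℂ] ℂ} {ι : A →ₗ[ℂ] H}
    (hdense : DenseRange ι)
    (hip : ∀ a b : A, (inner ℂ (ι b) (ι a) : ℂ) = t (star b * a))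
    (htr : ∀ a b : A, t (a * b) = t (b * a))
    {rho : A → H →L[ℂ] H} (hrho : ∀ a b : A, rho a (ι b) = ι (b * a))
    (b c : A) (v : H) :
    ⟪ι b, rho c v⟫ = ⟪ι (b * star c), v⟫ := by
  have heq : (fun v : H => ⟪ι b, rho c v⟫) = fun v : H => ⟪ι (b * star c), v⟫ := by
    refine hdense.equalizer (continuous_const.inner (rho c).continuous)
      (continuous_const.inner continuous_id) (funext fun e => ?_)
    show ⟪ι b, rho c (ι e)⟫ = ⟪ι (b * star c), ι e⟫
    rw [hrho, hip, hip]
    have : star b * (e * c) = (star b * e) * c := by rw [mul_assoc]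
    rw [this, htr (star b * e) c]
    congr 1
    simp [star_mul, mul_assoc]
  exact congrFun heq v

/-- The core commutation lemma: any operator commuting with all `lam a` commutes with any
operator commuting with all `rho a`. -/
private theorem comm_key {t : A →ₗ[ℂ] ℂ} {ι : A →ₗ[ℂ] H}
    (hdense : DenseRange ι)
    (hip : ∀ a b : A, (inner ℂ (ι b) (ι a) : ℂ) = t (star b * a))
    (htr : ∀ a b : A, t (a * b) = t (b * a))
    {lam : A → H →L[ℂ] H} (hlam : ∀ a b : A, lam a (ι b) = ι (a * b))
    {rho : A → H →L[ℂ] H} (hrho : ∀ a b : A, rho a (ι b) = ι (b * a))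
    (x y : H →L[ℂ] H)
    (hx : ∀ a, lam a * x = x * lam a) (hy : ∀ a, rho a * y = y * rho a) :
    x * y = y * x := by
  have hx' : ∀ (a : A) (v : H), x (lam a v) = lam a (x v) := by
    intro a v
    have := DFunLike.congr_fun (hx a) v
    simp only [ContinuousLinearMap.mul_apply] at this
    exact this.symm
  have hy' : ∀ (a : A) (v : H), y (rho a v) = rho a (y v) := by
    intro a v
    have := DFunLike.congr_fun (hy a) v
    simp only [ContinuousLinearMap.mul_apply] at this
    exact this.symm
  set ξ := x (ι 1) with hξ
  set η := y (ι 1) with hη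
  have hxv : ∀ b : A, x (ι b) = lam b ξ := by
    intro b
    have h1 : (ι b : H) = lam b (ι 1) := by rw [hlam, mul_one]
    rw [h1, hx']
  have hyv : ∀ b : A, y (ι b) = rho b η := by
    intro b
    have h1 : (ι b : H) = rho b (ι 1) := by rw [hrho, one_mul]
    rw [h1, hy']
  obtain ⟨c, hc⟩ := approx hdense η
  obtain ⟨d, hd⟩ := approx hdense ξ
  obtain ⟨v, hv⟩ := star_limit hip htr hc
  have hgoal : ∀ a : A, x (y (ι a)) = y (x (ι a)) := by
    intro a
    -- Step A
    have hA : Tendsto (fun n : ℕ => lam (c n * a) ξ) atTop (𝓝 (x (y (ι a)))) := by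
      have h1 : Tendsto (fun n : ℕ => x (rho a (ι (c n)))) atTop (𝓝 (x (rho a η))) :=
        ((x.continuous.comp (rho a).continuous).tendsto η).comp hc
      rw [hyv]
      exact h1.congr fun n => by rw [hrho, hxv]
    -- Step B
    have hB : Tendsto (fun m : ℕ => rho (a * d m) η) atTop (𝓝 (y (x (ι a)))) := by
      have h1 : Tendsto (fun m : ℕ => y (lam a (ι (d m)))) atTop (𝓝 (y (lam a ξ))) :=
        ((y.continuous.comp (lam a).continuous).tendsto ξ).comp hd
      rw [hxv]
      exact h1.congr fun m => by rw [hlam, hyv]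
    refine dense_ext hdense fun b => ?_
    -- inner products along step A
    have hA' : Tendsto (fun n : ℕ => ⟪ι b, lam (c n * a) ξ⟫) atTop
        (𝓝 ⟪ι b, x (y (ι a))⟫) :=
      ((continuous_const.inner continuous_id).tendsto _).comp hA
    -- identify the limit of step A inner products
    have hA'' : Tendsto (fun n : ℕ => ⟪ι b, lam (c n * a) ξ⟫) atTop
        (𝓝 ⟪lam (star a) (rho b v), ξ⟫) := by
      have h2 : Tendsto (fun n : ℕ => ⟪lam (star a) (rho b (ι (star (c n)))), ξ⟫) atTop
          (𝓝 ⟪lam (star a) (rho b v), ξ⟫) :=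
        ((((lam (star a)).continuous.comp (rho b).continuous).inner
          continuous_const).tendsto v).comp hv
      refine h2.congr fun n => ?_
      rw [lam_inner hdense hip hlam, hrho, hlam]
      congr 2
      simp [star_mul, mul_assoc]
    have hL1 : ⟪ι b, x (y (ι a))⟫ = ⟪lam (star a) (rho b v), ξ⟫ :=
      tendsto_nhds_unique hA' hA''
    -- inner products along step B
    have hB' : Tendsto (fun m : ℕ => ⟪ι (b * star (a * d m)), η⟫) atTop
        (𝓝 ⟪ι b, y (x (ι a))⟫) := by
      have h1 : Tendsto (fun m : ℕ => ⟪ι b, rho (a * d m) η⟫) atTop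
          (𝓝 ⟪ι b, y (x (ι a))⟫) :=
        ((continuous_const.inner continuous_id).tendsto _).comp hB
      exact h1.congr fun m => rho_inner hdense hip htr hrho _ _ _
    -- identify the limit of step B inner products
    have hFG : ∀ m : ℕ, ⟪ι (b * star (a * d m)), η⟫ = ⟪lam (star a) (rho b v), ι (d m)⟫ := by
      intro m
      -- rewrite RHS as ⟪v, ι (a * d m * star b)⟫
      have hR : ⟪lam (star a) (rho b v), ι (d m)⟫ = ⟪v, ι ((a * d m) * star b)⟫ := by
        rw [← inner_conj_symm, lam_inner hdense hip hlam, star_star,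
          rho_inner hdense hip htr hrho, inner_conj_symm]
      rw [hR]
      -- both sides are limits over n of equal sequences
      have hGlim : Tendsto (fun n : ℕ => ⟪ι (b * star (a * d m)), ι (c n)⟫) atTop
          (𝓝 ⟪ι (b * star (a * d m)), η⟫) :=
        ((continuous_const.inner continuous_id).tendsto _).comp hc
      have hFlim : Tendsto (fun n : ℕ => ⟪ι (star (c n)), ι ((a * d m) * star b)⟫) atTop
          (𝓝 ⟪v, ι ((a * d m) * star b)⟫) :=
        ((continuous_id.inner continuous_const).tendsto _).comp hv
      refine tendsto_nhds_unique (hGlim.congr fun n => ?_) hFlim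
      rw [hip, hip]
      have e1 : star (b * star (a * d m)) * c n = ((a * d m) * star b) * c n := by
        simp [star_mul, mul_assoc]
      rw [e1, htr ((a * d m) * star b) (c n)]
      congr 1
      simp [mul_assoc]
    have hB'' : Tendsto (fun m : ℕ => ⟪ι (b * star (a * d m)), η⟫) atTop
        (𝓝 ⟪lam (star a) (rho b v), ξ⟫) := by
      have h2 : Tendsto (fun m : ℕ => ⟪lam (star a) (rho b v), ι (d m)⟫) atTop
          (𝓝 ⟪lam (star a) (rho b v), ξ⟫) :=
        ((continuous_const.inner continuous_id).tendsto _).comp hd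
      exact h2.congr fun m => (hFG m).symm
    have hL2 : ⟪ι b, y (x (ι a))⟫ = ⟪lam (star a) (rho b v), ξ⟫ :=
      tendsto_nhds_unique hB' hB''
    rw [hL1, hL2]
  have heq : (⇑(x * y) : H → H) = ⇑(y * x) :=
    hdense.equalizer (x * y).continuous (y * x).continuous
      (funext fun a => by simpa only [Function.comp,
        ContinuousLinearMap.mul_apply] using hgoal a)
  exact ContinuousLinearMap.ext fun v => congrFun heq v

end PreVN

/-- Let `A` be a finite pre-von Neumann algebra realized by its GNS embedding
`ι : A → H` (dense range, `⟪ι b, ι a⟫ = t(b* a)`), with `λ, ρ : A → B(H)` the bounded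
extensions of left and right multiplication. Then `M^λ = λ(A)''` and `M^ρ = ρ(A)''`
are commutants of each other. -/
theorem stmt7 (A : Type*) [Ring A] [Algebra ℂ A] [StarRing A]
    (H : Type*) [NormedAddCommGroup H] [InnerProductSpace ℂ H] [CompleteSpace H]
    (t : A →ₗ[ℂ] ℂ) (ι : A →ₗ[ℂ] H)
    (hdense : DenseRange ι) (hinj : Function.Injective ι)
    (hip : ∀ a b : A, (inner ℂ (ι b) (ι a) : ℂ) = t (star b * a))
    (ht1 : t 1 = 1) (htr : ∀ a b : A, t (a * b) = t (b * a))
    (lam : A → H →L[ℂ] H) (hlam : ∀ a b : A, lam a (ι b) = ι (a * b))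
    (rho : A → H →L[ℂ] H) (hrho : ∀ a b : A, rho a (ι b) = ι (b * a)) :
    Set.centralizer (Set.centralizer (Set.centralizer (Set.range lam))) =
      Set.centralizer (Set.centralizer (Set.range rho)) ∧
    Set.centralizer (Set.centralizer (Set.centralizer (Set.range rho))) =
      Set.centralizer (Set.centralizer (Set.range lam)) := by
  -- `lam a` and `rho b` commute
  have hcomm : ∀ a b : A, lam a * rho b = rho b * lam a := by
    intro a b
    have heq : (⇑(lam a * rho b) : H → H) = ⇑(rho b * lam a) :=
      hdense.equalizer (lam a * rho b).continuous (rho b * lam a).continuous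
        (funext fun e => by
          simp only [Function.comp, ContinuousLinearMap.mul_apply]
          rw [hrho, hlam, hlam, hrho, mul_assoc])
    exact ContinuousLinearMap.ext fun v => congrFun heq v
  have hLR : Set.range lam ⊆ Set.centralizer (Set.range rho) := by
    rintro _ ⟨a, rfl⟩
    rw [Set.mem_centralizer_iff]
    rintro _ ⟨b, rfl⟩
    exact (hcomm a b).symm
  have hRL : Set.range rho ⊆ Set.centralizer (Set.range lam) := by
    rintro _ ⟨b, rfl⟩
    rw [Set.mem_centralizer_iff]
    rintro _ ⟨a, rfl⟩
    exact hcomm a b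
  have hkey : ∀ x ∈ Set.centralizer (Set.range lam), ∀ y ∈ Set.centralizer (Set.range rho),
      x * y = y * x := by
    intro x hx y hy
    refine comm_key hdense hip htr hlam hrho x y (fun a => ?_) (fun b => ?_)
    · exact hx (lam a) (Set.mem_range_self a)
    · exact hy (rho b) (Set.mem_range_self b)
  have h1 : Set.centralizer (Set.range lam) ⊆
      Set.centralizer (Set.centralizer (Set.range rho)) := by
    intro x hx
    rw [Set.mem_centralizer_iff]
    intro y hy
    exact (hkey x hx y hy).symm
  have h2 : Set.centralizer (Set.range rho) ⊆
      Set.centralizer (Set.centralizer (Set.range lam)) := by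
    intro y hy
    rw [Set.mem_centralizer_iff]
    intro x hx
    exact hkey x hx y hy
  constructor
  · rw [Set.centralizer_centralizer_centralizer]
    exact le_antisymm h1 (Set.centralizer_subset hLR)
  · rw [Set.centralizer_centralizer_centralizer]
    exact le_antisymm h2 (Set.centralizer_subset hRL)
end

section
/- Let A be a finite pre-von Neumann algebra with completion H and vacuum vector Ω, and let M^λ = λ(A)''. Then the vector state t(x) = ⟨xΩ, Ω⟩ restricted to M^λ is a faithful normal tracial state extending the trace of A. -/
/-- Let `A` be a finite pre-von Neumann algebra realized by its GNS embedding
`ι : A → H`, with vacuum vector `Ω = ι 1` and left regular representation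
`λ : A → B(H)`, and let `M^λ = λ(A)''`.  Then the vector state `T x = ⟪Ω, x Ω⟫`
restricted to `M^λ` is a faithful normal (here: weak-operator continuous) tracial
state extending the trace of `A`. -/
theorem stmt8 (A : Type*) [Ring A] [Algebra ℂ A] [StarRing A]
    (H : Type*) [NormedAddCommGroup H] [InnerProductSpace ℂ H] [CompleteSpace H]
    (t : A →ₗ[ℂ] ℂ) (ι : A →ₗ[ℂ] H)
    (hdense : DenseRange ι) (hinj : Function.Injective ι)
    (hip : ∀ a b : A, (inner ℂ (ι b) (ι a) : ℂ) = t (star b * a))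
    (ht1 : t 1 = 1) (htr : ∀ a b : A, t (a * b) = t (b * a))
    (lam : A → H →L[ℂ] H) (hlam : ∀ a b : A, lam a (ι b) = ι (a * b)) :
    let Mlam := Set.centralizer (Set.centralizer (Set.range lam))
    let T : (H →L[ℂ] H) → ℂ := fun x => inner ℂ (ι 1) (x (ι 1))
    -- state:
    (T 1 = 1) ∧
    (∀ x ∈ Mlam, 0 ≤ (T (star x * x)).re ∧ (T (star x * x)).im = 0) ∧
    -- tracial:
    (∀ x ∈ Mlam, ∀ y ∈ Mlam, T (x * y) = T (y * x)) ∧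
    -- faithful:
    (∀ x ∈ Mlam, T (star x * x) = 0 → x = 0) ∧
    -- extends the trace of `A`:
    (∀ a : A, T (lam a) = t a) ∧
    -- normal (indeed weak-operator continuous, being a vector state):
    (∀ (It : Type) (l : Filter It) (x : It → (H →L[ℂ] H)) (x₀ : H →L[ℂ] H),
      (∀ ξ η : H, Filter.Tendsto (fun i => (inner ℂ ξ ((x i) η) : ℂ)) l
          (nhds (inner ℂ ξ (x₀ η)))) →
      Filter.Tendsto (fun i => T (x i)) l (nhds (T x₀))) := by
  intro Mlam T
  -- norms are star-invariant on the range of ι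
  have hnorm : ∀ a : A, ‖ι (star a)‖ = ‖ι a‖ := by
    intro a
    have h1 : (inner ℂ (ι (star a)) (ι (star a)) : ℂ) = inner ℂ (ι a) (ι a) := by
      rw [hip, hip, star_star, htr]
    rw [inner_self_eq_norm_sq_to_K, inner_self_eq_norm_sq_to_K] at h1
    have h2 : ‖ι (star a)‖ ^ 2 = ‖ι a‖ ^ 2 := by exact_mod_cast h1
    rw [← Real.sqrt_sq (norm_nonneg (ι (star a))), ← Real.sqrt_sq (norm_nonneg (ι a)), h2]
  -- extension lemma
  have hext : ∀ f g : H →L[ℂ] H, (∀ c : A, f (ι c) = g (ι c)) → f = g := by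
    intro f g h
    apply ContinuousLinearMap.coeFn_injective
    exact hdense.equalizer f.continuous g.continuous (funext h)
  -- right multiplications
  have hrho : ∀ b : A, ∃ r : H →L[ℂ] H, ∀ c : A, r (ι c) = ι (c * b) := by
    intro b
    have hS : Dense ((LinearMap.range ι : Submodule ℂ H) : Set H) := by
      rw [LinearMap.coe_range]; exact hdense
    set eq1 : A ≃ₗ[ℂ] LinearMap.range ι := LinearEquiv.ofInjective ι hinj with heq1
    set g0 : (LinearMap.range ι) →ₗ[ℂ] H :=
      (ι ∘ₗ LinearMap.mulRight ℂ b) ∘ₗ (eq1.symm : LinearMap.range ι →ₗ[ℂ] A) with hg0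
    have hg0app : ∀ c : A, g0 (eq1 c) = ι (c * b) := by
      intro c
      simp [hg0, LinearEquiv.symm_apply_apply]
    have hcoe : ∀ c : A, ((eq1 c : LinearMap.range ι) : H) = ι c := fun c => rfl
    have hbound : ∀ s : LinearMap.range ι, ‖g0 s‖ ≤ ‖lam (star b)‖ * ‖s‖ := by
      intro s
      obtain ⟨c, rfl⟩ := eq1.surjective s
      rw [hg0app]
      have h3 : ι (c * b) = ι (star (star b * star c)) := by
        rw [star_mul, star_star, star_star]
      have h4 : ‖ι (c * b)‖ = ‖ι (star b * star c)‖ := by rw [h3, hnorm]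
      have h5 : ‖(eq1 c : LinearMap.range ι)‖ = ‖ι c‖ := by
        rw [← hcoe c]; rfl
      rw [h4, h5, ← hlam]
      calc ‖lam (star b) (ι (star c))‖ ≤ ‖lam (star b)‖ * ‖ι (star c)‖ :=
            (lam (star b)).le_opNorm _
        _ = ‖lam (star b)‖ * ‖ι c‖ := by rw [hnorm]
    set g : (LinearMap.range ι) →L[ℂ] H := LinearMap.mkContinuous g0 _ hbound with hg
    refine ⟨ContinuousLinearMap.extend g (LinearMap.range ι).subtypeL, ?_⟩
    intro c
    have : ι c = (LinearMap.range ι).subtypeL (eq1 c) := rfl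
    rw [this, ContinuousLinearMap.extend_eq (h_dense := hS.denseRange_val)
      (h_e := isUniformEmbedding_subtype_val.isUniformInducing)]
    show g0 (eq1 c) = ι (c * b)
    exact hg0app c
  choose rho hrhoapp using hrho
  -- rho b lies in the commutant of lam
  have hrho_comm : ∀ b : A, rho b ∈ Set.centralizer (Set.range lam) := by
    intro b m hm
    obtain ⟨a, rfl⟩ := hm
    apply hext
    intro c
    rw [ContinuousLinearMap.mul_apply, ContinuousLinearMap.mul_apply,
      hrhoapp, hlam, hlam, hrhoapp, mul_assoc]
  -- elements of Mlam commute with rho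
  have hcomm : ∀ x ∈ Mlam, ∀ (b : A) (ξ : H), x (rho b ξ) = rho b (x ξ) := by
    intro x hx b ξ
    have := hx (rho b) (hrho_comm b)
    calc x (rho b ξ) = (x * rho b) ξ := rfl
      _ = (rho b * x) ξ := by rw [← this]
      _ = rho b (x ξ) := rfl
  have hxiota : ∀ x ∈ Mlam, ∀ c : A, x (ι c) = rho c (x (ι 1)) := by
    intro x hx c
    have h1 : ι c = rho c (ι 1) := by rw [hrhoapp, one_mul]
    rw [h1, hcomm x hx]
  -- inner product against Ω of rho
  have hOmega : ∀ (b : A) (ξ : H),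
      (inner ℂ (ι 1) (rho b ξ) : ℂ) = inner ℂ (ι (star b)) ξ := by
    intro b
    have h1 : Continuous fun ξ : H => (inner ℂ (ι 1) (rho b ξ) : ℂ) :=
      continuous_const.inner (rho b).continuous
    have h2 : Continuous fun ξ : H => (inner ℂ (ι (star b)) ξ : ℂ) :=
      continuous_const.inner continuous_id
    have h3 : (fun ξ : H => (inner ℂ (ι 1) (rho b ξ) : ℂ)) =
        fun ξ : H => (inner ℂ (ι (star b)) ξ : ℂ) := by
      apply hdense.equalizer h1 h2
      funext c
      show (inner ℂ (ι 1) (rho b (ι c)) : ℂ) = inner ℂ (ι (star b)) (ι c)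
      rw [hrhoapp, hip, hip, star_one, one_mul, star_star, htr]
    intro ξ; exact congrFun h3 ξ
  -- the square norm formula for T (star x * x)
  have hsq : ∀ x : H →L[ℂ] H, T (star x * x) = (‖x (ι 1)‖ : ℂ) ^ 2 := by
    intro x
    show (inner ℂ (ι 1) ((star x * x) (ι 1)) : ℂ) = _
    rw [ContinuousLinearMap.mul_apply, ContinuousLinearMap.star_eq_adjoint,
      ContinuousLinearMap.adjoint_inner_right, inner_self_eq_norm_sq_to_K]
    norm_cast
  -- sequences approximating vectors
  have hseq : ∀ ξ : H, ∃ a : ℕ → A,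
      Filter.Tendsto (fun n => ι (a n)) Filter.atTop (nhds ξ) := by
    intro ξ
    obtain ⟨u, hu, hul⟩ := mem_closure_iff_seq_limit.mp (hdense ξ)
    choose a ha using hu
    refine ⟨a, ?_⟩
    have : (fun n => ι (a n)) = u := funext ha
    rw [this]; exact hul
  -- key convergence lemma
  have key : ∀ x ∈ Mlam, ∀ (y : H →L[ℂ] H) (a b : ℕ → A),
      Filter.Tendsto (fun n => ι (a n)) Filter.atTop (nhds (x (ι 1))) →
      Filter.Tendsto (fun n => ι (b n)) Filter.atTop (nhds (y (ι 1))) →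
      Filter.Tendsto (fun n => t (b n * a n)) Filter.atTop (nhds (T (x * y))) := by
    intro x hx y a b ha hb
    have h1 : Filter.Tendsto (fun n => (inner ℂ (ι 1) (x (ι (b n))) : ℂ))
        Filter.atTop (nhds (T (x * y))) := by
      have hc : Continuous fun ζ : H => (inner ℂ (ι 1) (x ζ) : ℂ) :=
        continuous_const.inner x.continuous
      exact (hc.tendsto (y (ι 1))).comp hb
    have h1' : Filter.Tendsto (fun n => (inner ℂ (ι (star (b n))) (x (ι 1)) : ℂ))
        Filter.atTop (nhds (T (x * y))) := by
      have heq : (fun n => (inner ℂ (ι 1) (x (ι (b n))) : ℂ)) =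
          fun n => (inner ℂ (ι (star (b n))) (x (ι 1)) : ℂ) := by
        funext n
        rw [hxiota x hx (b n), hOmega]
      rwa [heq] at h1
    have h2 : Filter.Tendsto
        (fun n => t (b n * a n) - (inner ℂ (ι (star (b n))) (x (ι 1)) : ℂ))
        Filter.atTop (nhds 0) := by
      have heq : ∀ n, t (b n * a n) - (inner ℂ (ι (star (b n))) (x (ι 1)) : ℂ) =
          inner ℂ (ι (star (b n))) (ι (a n) - x (ι 1)) := by
        intro n
        rw [inner_sub_right, hip, star_star]
      have hbnd : ∀ n, ‖t (b n * a n) - (inner ℂ (ι (star (b n))) (x (ι 1)) : ℂ)‖ ≤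
          ‖ι (b n)‖ * ‖ι (a n) - x (ι 1)‖ := by
        intro n
        rw [heq n, ← hnorm (b n)]
        exact norm_inner_le_norm _ _
      have hg : Filter.Tendsto (fun n => ‖ι (b n)‖ * ‖ι (a n) - x (ι 1)‖)
          Filter.atTop (nhds 0) := by
        have h5 : Filter.Tendsto (fun n => ‖ι (b n)‖) Filter.atTop (nhds ‖y (ι 1)‖) :=
          hb.norm
        have h6 : Filter.Tendsto (fun n => ‖ι (a n) - x (ι 1)‖) Filter.atTop (nhds 0) := by
          have h7 : Filter.Tendsto (fun n => ι (a n) - x (ι 1)) Filter.atTop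
              (nhds (x (ι 1) - x (ι 1))) := ha.sub tendsto_const_nhds
          rw [sub_self] at h7
          simpa using h7.norm
        have := h5.mul h6
        simpa using this
      exact squeeze_zero_norm hbnd hg
    have := h2.add h1'
    simpa using this
  refine ⟨?_, ?_, ?_, ?_, ?_, ?_⟩
  · -- T 1 = 1
    show (inner ℂ (ι 1) ((1 : H →L[ℂ] H) (ι 1)) : ℂ) = 1
    rw [ContinuousLinearMap.one_apply, hip, star_one, one_mul, ht1]
  · -- positivity
    intro x _
    have hc : T (star x * x) = ((‖x (ι 1)‖ ^ 2 : ℝ) : ℂ) := by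
      rw [hsq x]; push_cast; ring
    rw [hc]
    refine ⟨?_, ?_⟩
    · simp only [Complex.ofReal_re]
      positivity
    · simp only [Complex.ofReal_im]
  · -- tracial
    intro x hx y hy
    obtain ⟨a, ha⟩ := hseq (x (ι 1))
    obtain ⟨b, hb⟩ := hseq (y (ι 1))
    have k1 := key x hx y a b ha hb
    have k2 := key y hy x b a hb ha
    have k2' : Filter.Tendsto (fun n => t (b n * a n)) Filter.atTop (nhds (T (y * x))) := by
      have : (fun n => t (a n * b n)) = fun n => t (b n * a n) := by
        funext n; exact htr (a n) (b n)
      rw [← this]; exact k2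
    exact tendsto_nhds_unique k1 k2'
  · -- faithful
    intro x hx h
    rw [hsq x] at h
    have h0 : x (ι 1) = 0 := by
      have : (‖x (ι 1)‖ : ℂ) ^ 2 = 0 := h
      have h1 : ‖x (ι 1)‖ = 0 := by
        have := pow_eq_zero_iff (n := 2) (by norm_num) |>.mp this
        exact_mod_cast this
      exact norm_eq_zero.mp h1
    apply hext x 0
    intro c
    rw [hxiota x hx, h0, map_zero, ContinuousLinearMap.zero_apply]
  · -- extends the trace
    intro a
    show (inner ℂ (ι 1) (lam a (ι 1)) : ℂ) = t a
    rw [hlam, hip, star_one, one_mul, mul_one]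
  · -- normal
    intro It l x x₀ h
    exact h (ι 1) (ι 1)
end

section
/- Let A ⊆ B be a compatible pair of finite pre-von Neumann algebras (i.e., A is a unital *-subalgebra of B and the trace of B restricts to the trace of A). Identify the completion H_A as a closed subspace of H_B. Then the inclusion A ⊆ B extends uniquely to a normal unital injective *-homomorphism ι : λ_A(A)'' → λ_B(B)'' whose image is λ_B(A)'', and ι(x)Ω = xΩ for all x ∈ λ_A(A)''. -/
open ContinuousLinearMap Filter

local notation "⟪" x ", " y "⟫" => @inner ℂ _ _ x y

section Helpers

section Helpers

lemma aux_dense_prop {W α ι' : Type*} [TopologicalSpace W] [TopologicalSpace α] [T2Space α]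
    {g : ι' → W} (hd : Dense (Set.range g)) {φ ψ : W → α}
    (hφ : Continuous φ) (hψ : Continuous ψ) (h : ∀ i, φ (g i) = ψ (g i)) : ∀ x, φ x = ψ x := by
  have := Continuous.ext_on hd hφ hψ (by rintro _ ⟨i, rfl⟩; exact h i)
  exact fun x => congrFun this x

lemma aux_dense_ext {W V ι' : Type*} [NormedAddCommGroup W] [NormedSpace ℂ W]
    [NormedAddCommGroup V] [NormedSpace ℂ V] {g : ι' → W} (hd : Dense (Set.range g))
    {T S : W →L[ℂ] V} (h : ∀ i, T (g i) = S (g i)) : T = S := by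
  apply ContinuousLinearMap.coeFn_injective
  exact funext (aux_dense_prop hd T.continuous S.continuous h)

lemma aux_dense_inner_ext {W ι' : Type*} [NormedAddCommGroup W] [InnerProductSpace ℂ W]
    {g : ι' → W} (hd : Dense (Set.range g)) {v w : W}
    (h : ∀ i, (inner ℂ (g i) v : ℂ) = inner ℂ (g i) w) : v = w := by
  have h' : ∀ u : W, (inner ℂ u v : ℂ) = inner ℂ u w :=
    aux_dense_prop hd (continuous_id.inner continuous_const)
      (continuous_id.inner continuous_const) h
  have h2 : (inner ℂ (v - w) (v - w) : ℂ) = 0 := by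
    rw [inner_sub_right, h' (v - w), sub_self]
  rwa [inner_self_eq_zero, sub_eq_zero] at h2

lemma aux_adj {W ι' : Type*} [NormedAddCommGroup W] [InnerProductSpace ℂ W] [CompleteSpace W]
    {g : ι' → W} (hd : Dense (Set.range g)) {T S : W →L[ℂ] W}
    (h : ∀ i j, (inner ℂ (T (g i)) (g j) : ℂ) = inner ℂ (g i) (S (g j))) :
    T = ContinuousLinearMap.adjoint S := by
  rw [ContinuousLinearMap.eq_adjoint_iff]
  intro x y
  have step1 : ∀ j, ∀ x, (inner ℂ (T x) (g j) : ℂ) = inner ℂ x (S (g j)) := fun j =>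
    aux_dense_prop hd ((T.continuous.inner continuous_const))
      (continuous_id.inner continuous_const) (fun i => h i j)
  exact aux_dense_prop hd (continuous_const.inner continuous_id)
    (continuous_const.inner S.continuous) (fun j => step1 j x) y


lemma aux_extend {B H : Type*} [Ring B] [Algebra ℂ B]
    [NormedAddCommGroup H] [NormedSpace ℂ H] [CompleteSpace H]
    (ιB : B →ₗ[ℂ] H) (hdense : DenseRange ιB) (hinj : Function.Injective ιB)
    (g : B →ₗ[ℂ] H) (C : ℝ) (hC : 0 ≤ C) (hb : ∀ b, ‖g b‖ ≤ C * ‖ιB b‖) :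
    ∃ y : H →L[ℂ] H, (∀ b, y (ιB b) = g b) ∧ ‖y‖ ≤ C := by
  set R := LinearMap.range ιB with hR
  let e : B ≃ₗ[ℂ] R := LinearEquiv.ofInjective ιB hinj
  have he : ∀ b, ((e b : R) : H) = ιB b := fun b => rfl
  let u : R →ₗ[ℂ] H := g.comp e.symm.toLinearMap
  have hu : ∀ v : R, ‖u v‖ ≤ C * ‖v‖ := by
    intro v
    have hv : ιB (e.symm v) = (v : H) := by
      symm
      conv_lhs => rw [← e.apply_symm_apply v]
      exact he (e.symm v)
    have : ‖u v‖ = ‖g (e.symm v)‖ := rfl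
    rw [this]
    calc ‖g (e.symm v)‖ ≤ C * ‖ιB (e.symm v)‖ := hb _
      _ = C * ‖v‖ := by rw [hv]; rfl
  let u' : R →L[ℂ] H := u.mkContinuous C hu
  have hu' : ∀ v : R, u' v = u v := fun v => rfl
  let e₂ : R →L[ℂ] H := R.subtypeL
  have h_dense : DenseRange e₂ := by
    apply Dense.mono _ hdense
    rintro _ ⟨b, rfl⟩
    exact ⟨e b, rfl⟩
  have h_e : IsUniformInducing e₂ := isUniformEmbedding_subtype_val.isUniformInducing
  refine ⟨u'.extend e₂, ?_, ?_⟩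
  · intro b
    have : ιB b = e₂ (e b) := rfl
    rw [this, ContinuousLinearMap.extend_eq _ h_dense h_e]
    show u (e b) = g b
    show g (e.symm (e b)) = g b
    rw [e.symm_apply_apply b]
  · apply ContinuousLinearMap.opNorm_le_bound _ hC
    have hcl : IsClosed {v : H | ‖(u'.extend e₂) v‖ ≤ C * ‖v‖} :=
      isClosed_le (ContinuousLinearMap.continuous _).norm (continuous_const.mul continuous_norm)
    have hsub : Set.range ιB ⊆ {v : H | ‖(u'.extend e₂) v‖ ≤ C * ‖v‖} := by
      rintro _ ⟨b, rfl⟩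
      have h1 : ιB b = e₂ (e b) := rfl
      simp only [Set.mem_setOf_eq]
      rw [h1, ContinuousLinearMap.extend_eq _ h_dense h_e]
      have : u' (e b) = g b := by
        show g (e.symm (e b)) = g b
        rw [e.symm_apply_apply b]
      rw [this, ← h1]
      exact hb b
    intro v
    have : v ∈ {v : H | ‖(u'.extend e₂) v‖ ≤ C * ‖v‖} := by
      have h2 := hcl.closure_subset_iff.2 hsub
      rw [hdense.closure_eq] at h2
      exact h2 (Set.mem_univ v)
    exact this

lemma aux_iter (u : ℕ → ℝ) (M W : ℝ) (hu0 : ∀ m, 0 ≤ u m) (hW : 0 ≤ W)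
    (hcs : ∀ m, u m ^ 2 ≤ u 0 * u (2 * m)) (hM : ∀ m, u m ≤ M * W ^ m) :
    u 1 ≤ u 0 * W := by
  have hpow : ∀ k : ℕ, u 1 ^ (2 ^ k) ≤ u 0 ^ (2 ^ k - 1) * u (2 ^ k) := by
    intro k
    induction k with
    | zero => simpa using le_refl (u 1)
    | succ k ih =>
      have h1 : u 1 ^ (2 ^ (k+1)) = (u 1 ^ (2 ^ k)) ^ 2 := by
        rw [← pow_mul, pow_succ]
      have h2 : (u 1 ^ (2 ^ k)) ^ 2 ≤ (u 0 ^ (2 ^ k - 1) * u (2 ^ k)) ^ 2 := by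
        apply pow_le_pow_left₀ (pow_nonneg (hu0 1) _) ih
      have h3 : (u 0 ^ (2 ^ k - 1) * u (2 ^ k)) ^ 2
          = u 0 ^ (2 * (2 ^ k - 1)) * u (2 ^ k) ^ 2 := by
        rw [mul_pow, ← pow_mul, mul_comm (2 ^ k - 1) 2]
      have h4 : u (2 ^ k) ^ 2 ≤ u 0 * u (2 ^ (k+1)) := by
        have := hcs (2 ^ k)
        rwa [show 2 * 2 ^ k = 2 ^ (k+1) by rw [pow_succ, mul_comm]] at this
      have h5 : u 0 ^ (2 * (2 ^ k - 1)) * u (2 ^ k) ^ 2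
          ≤ u 0 ^ (2 * (2 ^ k - 1)) * (u 0 * u (2 ^ (k+1))) :=
        mul_le_mul_of_nonneg_left h4 (pow_nonneg (hu0 0) _)
      have h6 : u 0 ^ (2 * (2 ^ k - 1)) * (u 0 * u (2 ^ (k+1)))
          = u 0 ^ (2 ^ (k+1) - 1) * u (2 ^ (k+1)) := by
        rw [← mul_assoc, ← pow_succ]
        congr 2
        have h2k : (1:ℕ) ≤ 2 ^ k := Nat.one_le_two_pow
        omega
      calc u 1 ^ (2 ^ (k+1)) = (u 1 ^ (2 ^ k)) ^ 2 := h1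
        _ ≤ (u 0 ^ (2 ^ k - 1) * u (2 ^ k)) ^ 2 := h2
        _ = u 0 ^ (2 * (2 ^ k - 1)) * u (2 ^ k) ^ 2 := h3
        _ ≤ u 0 ^ (2 * (2 ^ k - 1)) * (u 0 * u (2 ^ (k+1))) := h5
        _ = u 0 ^ (2 ^ (k+1) - 1) * u (2 ^ (k+1)) := h6
  have hsq : ∀ a : ℝ, 0 ≤ a → ∀ b : ℝ, a ^ (2:ℕ) ≤ b → b ≤ 0 → a = 0 := by
    intro a ha b h1 h2; nlinarith
  rcases eq_or_lt_of_le (hu0 0) with h0 | h0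
  · -- u 0 = 0
    have h1 : u 1 ^ (2:ℕ) ≤ u 0 ^ (2^1 - 1) * u (2^1) := by
      have := hpow 1; norm_num at this ⊢; convert this using 2 <;> norm_num
    have h2 : u 0 ^ (2^1 - 1) * u (2^1) = 0 := by
      rw [← h0]; norm_num
    have h3 : u 1 = 0 := hsq _ (hu0 1) _ h1 (le_of_eq h2)
    rw [h3, ← h0, zero_mul]
  · rcases eq_or_lt_of_le hW with hW0 | hW0
    · -- W = 0
      have hu2 : u 2 = 0 := by
        have hM2 := hM 2
        rw [← hW0] at hM2
        norm_num at hM2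
        exact le_antisymm hM2 (hu0 2)
      have h1 : u 1 ^ (2:ℕ) ≤ u 0 ^ (2^1 - 1) * u (2^1) := by
        have := hpow 1; norm_num at this ⊢; convert this using 2 <;> norm_num
      have h2 : u 0 ^ (2^1 - 1) * u (2^1) = 0 := by
        norm_num; right; exact hu2
      have h3 : u 1 = 0 := hsq _ (hu0 1) _ h1 (le_of_eq h2)
      rw [h3, ← hW0, mul_zero]
    · -- 0 < W, 0 < u 0
      by_contra hcon
      push_neg at hcon
      set q : ℝ := u 1 / (u 0 * W) with hq
      have huw : 0 < u 0 * W := mul_pos h0 hW0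
      have hq1 : 1 < q := (one_lt_div huw).2 hcon
      have hkey : ∀ k : ℕ, u 0 * q ^ (2 ^ k) ≤ M := by
        intro k
        have h := (hpow k).trans (mul_le_mul_of_nonneg_left (hM (2 ^ k))
          (pow_nonneg (hu0 0) _))
        have hrw : u 1 ^ (2^k) = q ^ (2^k) * (u 0 * W) ^ (2^k) := by
          rw [hq, div_pow, div_mul_cancel₀]
          exact ne_of_gt (pow_pos huw _)
        rw [hrw] at h
        have h2 : u 0 ^ (2 ^ k - 1) * (M * W ^ 2 ^ k) * u 0 = M * (u 0 * W) ^ (2^k) := by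
          have h2k : (1:ℕ) ≤ 2 ^ k := Nat.one_le_two_pow
          rw [mul_pow]
          calc u 0 ^ (2 ^ k - 1) * (M * W ^ 2 ^ k) * u 0
              = M * W ^ 2 ^ k * (u 0 ^ (2 ^ k - 1) * u 0 ^ 1) := by ring
            _ = M * W ^ 2 ^ k * u 0 ^ (2 ^ k) := by
                rw [← pow_add, show 2 ^ k - 1 + 1 = 2 ^ k by omega]
            _ = M * (u 0 ^ 2 ^ k * W ^ 2 ^ k) := by ring
        have h3 : q ^ (2^k) * (u 0 * W) ^ (2^k) * u 0 ≤ M * (u 0 * W) ^ (2^k) := by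
          calc q ^ (2^k) * (u 0 * W) ^ (2^k) * u 0
              ≤ u 0 ^ (2 ^ k - 1) * (M * W ^ 2 ^ k) * u 0 :=
                mul_le_mul_of_nonneg_right h (hu0 0)
            _ = M * (u 0 * W) ^ (2^k) := h2
        have hpos : 0 < (u 0 * W) ^ (2^k) := pow_pos huw _
        nlinarith [hpos]
      obtain ⟨n, hn⟩ := pow_unbounded_of_one_lt (M / u 0) hq1
      have h4 : q ^ n ≤ q ^ (2 ^ n) :=
        pow_le_pow_right₀ (le_of_lt hq1) (le_of_lt (Nat.lt_two_pow_self (n := n)))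
      have h5 : M / u 0 < q ^ (2 ^ n) := lt_of_lt_of_le hn h4
      have h6 : M < u 0 * q ^ (2 ^ n) := by
        rw [div_lt_iff₀ h0] at h5; nlinarith
      exact absurd (hkey n) (not_le.2 h6)

end Helpers

set_option maxHeartbeats 4000000
set_option synthInstance.maxHeartbeats 200000
/-- Let `A ⊆ B` (via an injective unital *-homomorphism `f`) be a compatible pair of
finite pre-von Neumann algebras: the trace `tB` of `B` restricts to the trace `tA` of
`A`.  Realize `B` by its GNS embedding `ιB : B → H` (dense range,
`⟪ιB b', ιB b⟫ = tB(b'* b)`), let `K ⊆ H` be the closed subspace which is the closure of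
`ιB(f(A))` (the completion `H_A` of `A`), let `lamB : B → B(H)` and `lamA : A → B(K)`
be the left regular representations, and let `Ω = ιB 1` be the common vacuum vector.
Then the inclusion `A ⊆ B` extends uniquely to a normal unital injective
*-homomorphism `ι : λ_A(A)'' → λ_B(B)''` whose image is `λ_B(A)''` and which satisfies
`ι(x) Ω = x Ω` for all `x ∈ λ_A(A)''`. -/
theorem stmt9 (A B : Type*) [Ring A] [Algebra ℂ A] [StarRing A]
    [Ring B] [Algebra ℂ B] [StarRing B]
    (f : A →⋆ₐ[ℂ] B) (hf : Function.Injective f)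
    (tA : A →ₗ[ℂ] ℂ) (tB : B →ₗ[ℂ] ℂ)
    (htA1 : tA 1 = 1) (htAtr : ∀ a a' : A, tA (a * a') = tA (a' * a))
    (htB1 : tB 1 = 1) (htBtr : ∀ b b' : B, tB (b * b') = tB (b' * b))
    (hcompat : ∀ a : A, tB (f a) = tA a)
    (H : Type*) [NormedAddCommGroup H] [InnerProductSpace ℂ H] [CompleteSpace H]
    (ιB : B →ₗ[ℂ] H) (hdense : DenseRange ιB) (hinj : Function.Injective ιB)
    (hip : ∀ b b' : B, (inner ℂ (ιB b') (ιB b) : ℂ) = tB (star b' * b))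
    (lamB : B → H →L[ℂ] H) (hlamB : ∀ b b' : B, lamB b (ιB b') = ιB (b * b'))
    (K : Submodule ℂ H) [CompleteSpace K]
    (hmem : ∀ a : A, ιB (f a) ∈ K)
    (hKdef : (K : Set H) = closure (Set.range fun a : A => ιB (f a)))
    (lamA : A → K →L[ℂ] K)
    (hlamA : ∀ a a' : A,
      lamA a ⟨ιB (f a'), hmem a'⟩ = (⟨ιB (f (a * a')), hmem (a * a')⟩ : K)) :
    let MA : Set (K →L[ℂ] K) := Set.centralizer (Set.centralizer (Set.range lamA))
    let MBA : Set (H →L[ℂ] H) :=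
      Set.centralizer (Set.centralizer (Set.range fun a : A => lamB (f a)))
    let Good : ((K →L[ℂ] K) → (H →L[ℂ] H)) → Prop := fun I =>
      -- unital *-homomorphism on MA:
      (I 1 = 1) ∧
      (∀ x ∈ MA, ∀ y ∈ MA, I (x * y) = I x * I y ∧ I (x + y) = I x + I y) ∧
      (∀ x ∈ MA, ∀ c : ℂ, I (c • x) = c • I x) ∧
      (∀ x ∈ MA, I (star x) = star (I x)) ∧
      -- injective, extends the inclusion, with image λ_B(A)'':
      Set.InjOn I MA ∧
      (∀ a : A, I (lamA a) = lamB (f a)) ∧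
      (I '' MA = MBA) ∧
      -- normal (weak-operator continuous on norm-bounded nets):
      (∀ (It : Type) (l : Filter It) (x : It → K →L[ℂ] K) (x₀ : K →L[ℂ] K),
        (∀ i, x i ∈ MA) → x₀ ∈ MA →
        (∃ C : ℝ, ∀ i, ‖x i‖ ≤ C) →
        (∀ ξ η : K, Filter.Tendsto (fun i => (inner ℂ ξ (x i η) : ℂ)) l
            (nhds (inner ℂ ξ (x₀ η)))) →
        ∀ ξ η : H, Filter.Tendsto (fun i => (inner ℂ ξ (I (x i) η) : ℂ)) l
            (nhds (inner ℂ ξ (I x₀ η)))) ∧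
      -- ι(x) Ω = x Ω:
      (∀ x ∈ MA, I x (ιB 1) = ((x ⟨ιB (f 1), hmem 1⟩ : K) : H))
    (∃ I, Good I) ∧ ∀ I₁ I₂, Good I₁ → Good I₂ → ∀ x ∈ MA, I₁ x = I₂ x := by
  intro MA MBA Good
  classical
  have hf1 : (f 1 : B) = 1 := map_one f
  -- basic trace facts
  have htstarB : ∀ b : B, tB (star b) = (starRingEnd ℂ) (tB b) := by
    intro b
    have h1 : ⟪ιB b, ιB 1⟫ = tB (star b * 1) := hip 1 b
    have h2 : ⟪ιB 1, ιB b⟫ = tB (star 1 * b) := hip b 1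
    rw [mul_one] at h1
    rw [star_one, one_mul] at h2
    rw [← h1, ← inner_conj_symm, h2]
  have hnorm_star : ∀ b : B, ‖ιB (star b)‖ = ‖ιB b‖ := by
    intro b
    have h1 : ⟪ιB (star b), ιB (star b)⟫ = ⟪ιB b, ιB b⟫ := by
      rw [hip, hip, star_star, htBtr]
    rw [norm_eq_sqrt_re_inner (𝕜 := ℂ), norm_eq_sqrt_re_inner (𝕜 := ℂ), h1]
  -- K side notation
  set KA : A → K := fun a => ⟨ιB (f a), hmem a⟩ with hKA_def
  have hdK : Dense (Set.range KA) := by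
    refine fun ξ => Metric.mem_closure_iff.2 fun ε hε => ?_
    have hξ : (ξ : H) ∈ closure (Set.range fun a : A => ιB (f a)) := by
      rw [← hKdef]; exact ξ.2
    obtain ⟨v, ⟨a, rfl⟩, hv⟩ := Metric.mem_closure_iff.1 hξ ε hε
    exact ⟨KA a, ⟨a, rfl⟩, by rwa [Subtype.dist_eq]⟩
  have hinnerKA : ∀ a a' : A, ⟪KA a, KA a'⟫ = (tA (star a * a') : ℂ) := by
    intro a a'
    rw [Submodule.coe_inner]
    show ⟪ιB (f a), ιB (f a')⟫ = (tA (star a * a') : ℂ)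
    rw [hip, ← map_star f, ← map_mul f, hcompat]
  have htstarA : ∀ a : A, tA (star a) = (starRingEnd ℂ) (tA a) := by
    intro a
    rw [← hcompat, ← hcompat, map_star f, htstarB]
  -- E and P
  set Ein : K →L[ℂ] H := K.subtypeL with hEin_def
  set Pr : H →L[ℂ] K := K.orthogonalProjectionOnto with hPr_def
  have hEinKA : ∀ a, Ein (KA a) = ιB (f a) := fun a => rfl
  have hEincoe : ∀ ξ : K, Ein ξ = (ξ : H) := fun ξ => rfl
  have hPrEin : ∀ ξ : K, Pr (Ein ξ) = ξ := fun ξ => Submodule.orthogonalProjectionOnto_mem_subspace_eq_self (K := K) ξ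
  have hadjEin : ContinuousLinearMap.adjoint Ein = Pr := Submodule.adjoint_subtypeL K
  have hadjPr : ContinuousLinearMap.adjoint Pr = Ein := by
    rw [← hadjEin, adjoint_adjoint]
  have hinnerEP : ∀ (ξ : K) (v : H), ⟪Ein ξ, v⟫ = ⟪ξ, Pr v⟫ := by
    intro ξ v
    have h := ContinuousLinearMap.adjoint_inner_right Ein ξ v
    rw [hadjEin] at h
    exact h.symm
  have hinnerPE : ∀ (v : H) (ξ : K), ⟪v, Ein ξ⟫ = ⟪Pr v, ξ⟫ := by
    intro v ξ
    have h := ContinuousLinearMap.adjoint_inner_left Ein ξ v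
    rw [hadjEin] at h
    exact h.symm
  -- construction of the right regular representation ρ
  have hρex : ∀ b : B, ∃ y : H →L[ℂ] H,
      (∀ b', y (ιB b') = ιB (b' * b)) ∧ ‖y‖ ≤ ‖lamB (star b)‖ := by
    intro b
    apply aux_extend ιB hdense hinj (ιB.comp (LinearMap.mulRight ℂ b)) _ (norm_nonneg _)
    intro b'
    show ‖ιB (b' * b)‖ ≤ _
    rw [← hnorm_star (b' * b), star_mul, ← hlamB]
    calc ‖lamB (star b) (ιB (star b'))‖ ≤ ‖lamB (star b)‖ * ‖ιB (star b')‖ :=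
        le_opNorm _ _
      _ = ‖lamB (star b)‖ * ‖ιB b'‖ := by rw [hnorm_star]
  choose ρ hρspec using hρex
  have hρ_app : ∀ b b', ρ b (ιB b') = ιB (b' * b) := fun b => (hρspec b).1
  -- ρ algebra
  have hρ_lam : ∀ b c, (ρ b) * (lamB c) = (lamB c) * (ρ b) := by
    intro b c
    apply aux_dense_ext hdense
    intro b'
    rw [mul_apply_eq_comp, mul_apply_eq_comp, hlamB, hρ_app, hρ_app, hlamB, mul_assoc]
  have hρ_comp : ∀ b b', (ρ b') * (ρ b) = ρ (b * b') := by
    intro b b'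
    apply aux_dense_ext hdense
    intro c
    rw [mul_apply_eq_comp, hρ_app, hρ_app, hρ_app, mul_assoc]
  have hρ_one : ρ 1 = 1 := by
    apply aux_dense_ext hdense
    intro b'
    rw [hρ_app, mul_one, one_apply_eq_self]
  have hρ_add : ∀ b₁ b₂, ρ (b₁ + b₂) = ρ b₁ + ρ b₂ := by
    intro b₁ b₂
    apply aux_dense_ext hdense
    intro c
    rw [hρ_app, add_apply, hρ_app, hρ_app, mul_add, map_add]
  have hρ_smul : ∀ (s : ℂ) b, ρ (s • b) = s • ρ b := by
    intro s b
    apply aux_dense_ext hdense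
    intro c
    rw [hρ_app, smul_apply, hρ_app, mul_smul_comm, map_smul]
  have hρ_adj : ∀ b, ContinuousLinearMap.adjoint (ρ b) = ρ (star b) := by
    intro b
    symm
    apply aux_adj hdense
    intro bi bj
    have h1 : ⟪ρ (star b) (ιB bi), ιB bj⟫ = tB (b * star bi * bj) := by
      rw [hρ_app, hip, star_mul, star_star]
    have h2 : ⟪ιB bi, ρ b (ιB bj)⟫ = tB (star bi * (bj * b)) := by
      rw [hρ_app, hip]
    rw [h1, h2, mul_assoc, htBtr, mul_assoc]
  have hlam_adj : ∀ c, ContinuousLinearMap.adjoint (lamB c) = lamB (star c) := by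
    intro c
    symm
    apply aux_adj hdense
    intro bi bj
    have h1 : ⟪lamB (star c) (ιB bi), ιB bj⟫ = tB (star bi * (c * bj)) := by
      rw [hlamB, hip, star_mul, star_star, mul_assoc]
    have h2 : ⟪ιB bi, lamB c (ιB bj)⟫ = tB (star bi * (c * bj)) := by
      rw [hlamB, hip]
    rw [h1, h2]
  -- lamA facts
  set Omh : K := KA 1 with hOmh_def
  have hlamA_app : ∀ a a', lamA a (KA a') = KA (a * a') := fun a a' => hlamA a a'
  have hlamA_mul : ∀ a a', lamA a * lamA a' = lamA (a * a') := by
    intro a a'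
    apply aux_dense_ext hdK
    intro a''
    rw [mul_apply_eq_comp, hlamA_app, hlamA_app, hlamA_app, mul_assoc]
  have hlamA_one : lamA 1 = 1 := by
    apply aux_dense_ext hdK
    intro a
    rw [hlamA_app, one_mul, one_apply_eq_self]
  have hlamA_adj : ∀ a, ContinuousLinearMap.adjoint (lamA a) = lamA (star a) := by
    intro a
    symm
    apply aux_adj hdK
    intro ai aj
    rw [hlamA_app, hlamA_app, hinnerKA, hinnerKA, star_mul, star_star, mul_assoc]
  have hEinlam : ∀ a ξ, Ein (lamA a ξ) = lamB (f a) (Ein ξ) := by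
    intro a
    apply aux_dense_prop hdK (Ein.continuous.comp (lamA a).continuous)
      ((lamB (f a)).continuous.comp Ein.continuous)
    intro a'
    show Ein (lamA a (KA a')) = lamB (f a) (Ein (KA a'))
    rw [hlamA_app, hEinKA, hEinKA, hlamB, ← map_mul]
  have hPrlam : ∀ a v, Pr (lamB (f a) v) = lamA a (Pr v) := by
    intro a
    have hop : Ein.comp (lamA (star a)) = (lamB (f (star a))).comp Ein :=
      ContinuousLinearMap.ext (hEinlam (star a))
    have h2 := congrArg ContinuousLinearMap.adjoint hop
    rw [adjoint_comp, adjoint_comp, hadjEin, hlamA_adj, star_star, hlam_adj,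
      map_star, star_star] at h2
    intro v
    calc Pr (lamB (f a) v) = (Pr.comp (lamB (f a))) v := rfl
      _ = ((lamA a).comp Pr) v := by rw [← h2]
      _ = lamA a (Pr v) := rfl
  have hPρE_D : ∀ b₀ : B, (Pr ∘L ((ρ b₀) ∘L Ein)) ∈ Set.centralizer (Set.range lamA) := by
    intro b₀
    rw [Set.mem_centralizer_iff]
    rintro _ ⟨a, rfl⟩
    apply ContinuousLinearMap.ext
    intro ξ
    rw [mul_apply_eq_comp, mul_apply_eq_comp]
    show lamA a (Pr (ρ b₀ (Ein ξ))) = Pr (ρ b₀ (Ein (lamA a ξ)))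
    rw [← hPrlam]
    congr 1
    have h3 := congrFun (congrArg DFunLike.coe (hρ_lam b₀ (f a))) (Ein ξ)
    rw [mul_apply_eq_comp, mul_apply_eq_comp] at h3
    rw [← h3, hEinlam]
  set ρA : A → (K →L[ℂ] K) := fun a => Pr ∘L ((ρ (f a)) ∘L Ein) with hρA_def
  have hρA_D : ∀ a, ρA a ∈ Set.centralizer (Set.range lamA) := fun a => hPρE_D (f a)
  have hρA_app : ∀ a a', ρA a (KA a') = KA (a' * a) := by
    intro a a'
    show Pr (ρ (f a) (Ein (KA a'))) = KA (a' * a)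
    rw [hEinKA, hρ_app, ← map_mul, ← hEinKA, hPrEin]
  have hρA_adj : ∀ a, ContinuousLinearMap.adjoint (ρA a) = ρA (star a) := by
    intro a
    show ContinuousLinearMap.adjoint (Pr.comp ((ρ (f a)).comp Ein)) = _
    rw [adjoint_comp, adjoint_comp, hadjPr, hadjEin, hρ_adj, ← map_star f]
    apply ContinuousLinearMap.ext
    intro ξ
    rfl
  have hρA_Ω : ∀ a, ρA a Omh = KA a := by
    intro a
    rw [hOmh_def, hρA_app, one_mul]
  have hlamA_Ω : ∀ a, lamA a Omh = KA a := by
    intro a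
    rw [hOmh_def, hlamA_app, mul_one]
  have hEρA : ∀ a ξ, ρ (f a) (Ein ξ) = Ein (ρA a ξ) := by
    intro a
    apply aux_dense_prop hdK ((ρ (f a)).continuous.comp Ein.continuous)
      (Ein.continuous.comp (ρA a).continuous)
    intro a'
    show ρ (f a) (Ein (KA a')) = Ein (ρA a (KA a'))
    rw [hEinKA, hρ_app, hρA_app, hEinKA, ← map_mul]
  have hnormOmh : ‖Omh‖ = 1 := by
    have h1 : ‖Omh‖ = ‖ιB (f 1)‖ := rfl
    rw [h1, hf1, norm_eq_sqrt_re_inner (𝕜 := ℂ), hip, star_one, one_mul, htB1]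
    norm_num
  -- MA closure facts
  have hMA_mem : ∀ x : K →L[ℂ] K, x ∈ MA ↔
      ∀ z ∈ Set.centralizer (Set.range lamA), z * x = x * z :=
    fun x => Set.mem_centralizer_iff
  have hstar_mulK : ∀ T S : K →L[ℂ] K, star (T * S) = star S * star T :=
    fun T S => star_mul T S
  have hstar_starK : ∀ T : K →L[ℂ] K, star (star T) = T := fun T => star_star T
  have hstar_powK : ∀ (T : K →L[ℂ] K) (n : ℕ), star (T ^ n) = star T ^ n :=
    fun T n => star_pow T n
  have hstar_lamA : ∀ a, star (lamA a) = lamA (star a) :=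
    fun a => (ContinuousLinearMap.star_eq_adjoint (lamA a)).trans (hlamA_adj a)
  have hcommA : ∀ x, x ∈ MA → ∀ z ∈ Set.centralizer (Set.range lamA),
      ∀ ξ, z (x ξ) = x (z ξ) := by
    intro x hx z hz ξ
    have h := (hMA_mem x).1 hx z hz
    calc z (x ξ) = (z * x) ξ := rfl
      _ = (x * z) ξ := by rw [h]
      _ = x (z ξ) := rfl
  have hstarD : ∀ z ∈ Set.centralizer (Set.range lamA),
      star z ∈ Set.centralizer (Set.range lamA) := by
    intro z hz
    rw [Set.mem_centralizer_iff]
    rintro _ ⟨a, rfl⟩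
    have h := hz (lamA (star a)) ⟨star a, rfl⟩
    have h2 := congrArg star h
    rw [hstar_mulK, hstar_mulK, hstar_lamA, star_star] at h2
    exact h2.symm
  have hMA_star : ∀ x ∈ MA, star x ∈ MA := by
    intro x hx
    rw [hMA_mem]
    intro z hz
    have h := (hMA_mem x).1 hx (star z) (hstarD z hz)
    have h2 := congrArg star h
    rw [hstar_mulK, hstar_mulK, hstar_starK] at h2
    exact h2.symm
  have hMA_mul : ∀ x ∈ MA, ∀ y ∈ MA, x * y ∈ MA := by
    intro x hx y hy
    rw [hMA_mem]
    intro z hz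
    rw [← mul_assoc, (hMA_mem x).1 hx z hz, mul_assoc, (hMA_mem y).1 hy z hz, mul_assoc]
  have hMA_add : ∀ x ∈ MA, ∀ y ∈ MA, x + y ∈ MA := by
    intro x hx y hy
    rw [hMA_mem]
    intro z hz
    rw [mul_add, add_mul, (hMA_mem x).1 hx z hz, (hMA_mem y).1 hy z hz]
  have hMA_smul : ∀ x ∈ MA, ∀ s : ℂ, s • x ∈ MA := by
    intro x hx s
    rw [hMA_mem]
    intro z hz
    apply ContinuousLinearMap.ext
    intro ξ
    show z ((s • x) ξ) = (s • x) (z ξ)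
    rw [ContinuousLinearMap.smul_apply, ContinuousLinearMap.smul_apply, map_smul,
      hcommA x hx z hz]
  have hMA_one : (1 : K →L[ℂ] K) ∈ MA := by
    rw [hMA_mem]
    intro z hz
    rw [mul_one, one_mul]
  have hlamA_MA : ∀ a, lamA a ∈ MA := by
    intro a
    rw [hMA_mem]
    intro z hz
    exact (hz (lamA a) ⟨a, rfl⟩).symm
  -- inner product moving helpers
  have hmove_r : ∀ (T : K →L[ℂ] K) (u v : K), ⟪T u, v⟫ = ⟪u, (star T) v⟫ := by
    intro T u v
    rw [ContinuousLinearMap.star_eq_adjoint]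
    exact (ContinuousLinearMap.adjoint_inner_right T u v).symm
  have hmove_l : ∀ (T : K →L[ℂ] K) (u v : K), ⟪u, T v⟫ = ⟪(star T) u, v⟫ := by
    intro T u v
    rw [ContinuousLinearMap.star_eq_adjoint]
    exact (ContinuousLinearMap.adjoint_inner_left T v u).symm
  -- THE BOUND
  have hbound : ∀ x : K →L[ℂ] K, x ∈ MA → ∀ b : B,
      ‖ρ b (Ein (x Omh))‖ ≤ ‖x‖ * ‖ιB b‖ := by
    intro x hx b
    set d : K →L[ℂ] H := (ρ b) ∘L Ein with hd_def
    have hdadj : ContinuousLinearMap.adjoint d = Pr ∘L (ρ (star b)) := by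
      rw [hd_def, adjoint_comp, hadjEin, hρ_adj]
    set c : K →L[ℂ] K := (ContinuousLinearMap.adjoint d) ∘L d with hc_def
    have hcop : c = Pr ∘L ((ρ (b * star b)) ∘L Ein) := by
      apply ContinuousLinearMap.ext
      intro ξ
      rw [hc_def, hdadj]
      show Pr (ρ (star b) (ρ b (Ein ξ))) = Pr (ρ (b * star b) (Ein ξ))
      congr 1
      have h := congrArg (fun T : H →L[ℂ] H => T (Ein ξ)) (hρ_comp b (star b))
      simpa [mul_apply] using h
    have hcD : c ∈ Set.centralizer (Set.range lamA) := by
      rw [hcop]; exact hPρE_D _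
    have hinner_dd : ∀ ξ η : K, ⟪d ξ, d η⟫ = ⟪ξ, c η⟫ := by
      intro ξ η
      rw [hc_def]
      exact (ContinuousLinearMap.adjoint_inner_right d ξ (d η)).symm
    set w : K →L[ℂ] K := star x * x with hw_def
    have hw_sa : star w = w := by rw [hw_def, hstar_mulK, hstar_starK]
    have hwMA : w ∈ MA := hMA_mul _ (hMA_star x hx) _ hx
    have hwpowMA : ∀ m : ℕ, w ^ m ∈ MA := by
      intro m
      induction m with
      | zero => simpa using hMA_one
      | succ m ih => rw [pow_succ]; exact hMA_mul _ ih _ hwMA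
    have key : ∀ y : K →L[ℂ] K, (c * y = y * c) → (c * star y = star y * c) →
        ⟪d (y Omh), d (y Omh)⟫ = ⟪d Omh, d ((star y * y) Omh)⟫ := by
      intro y h1 h2
      have hcomm2 : c * (star y * y) = (star y * y) * c := by
        rw [← mul_assoc, h2, mul_assoc, h1, ← mul_assoc]
      calc ⟪d (y Omh), d (y Omh)⟫ = ⟪y Omh, c (y Omh)⟫ := hinner_dd _ _
        _ = ⟪y Omh, y (c Omh)⟫ := by
            congr 1
            calc c (y Omh) = (c * y) Omh := rfl
              _ = (y * c) Omh := by rw [h1]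
              _ = y (c Omh) := rfl
        _ = ⟪Omh, (star y) (y (c Omh))⟫ := hmove_r y Omh _
        _ = ⟪Omh, (c * (star y * y)) Omh⟫ := by
            congr 1
            rw [hcomm2]
            rfl
        _ = ⟪Omh, c ((star y * y) Omh)⟫ := rfl
        _ = ⟪d Omh, d ((star y * y) Omh)⟫ := (hinner_dd _ _).symm
    set u : ℕ → ℝ := fun m => ‖d ((w ^ m) Omh)‖ with hu_def
    have hu0 : ∀ m, 0 ≤ u m := fun m => norm_nonneg _
    have hu0' : u 0 = ‖d Omh‖ := by
      show ‖d ((w ^ 0) Omh)‖ = ‖d Omh‖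
      rw [pow_zero, one_apply_eq_self]
    have hu0eq : u 0 = ‖ιB b‖ := by
      have h1 : u 0 = ‖d Omh‖ := by
        rw [hu_def]
        show ‖d ((w ^ 0) Omh)‖ = ‖d Omh‖
        rw [pow_zero, one_apply_eq_self]
      rw [h1]
      show ‖ρ b (Ein Omh)‖ = ‖ιB b‖
      have h2 : Ein Omh = ιB 1 := by rw [← hf1]; rfl
      rw [h2, hρ_app, one_mul]
    have hsqnorm : ∀ v : H, (‖v‖ : ℝ) ^ 2 = ‖(⟪v, v⟫ : ℂ)‖ := by
      intro v
      rw [inner_self_eq_norm_sq_to_K, norm_pow, RCLike.norm_ofReal, abs_norm]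
    have hucs : ∀ m, u m ^ 2 ≤ u 0 * u (2 * m) := by
      intro m
      have hc1 : c * w ^ m = w ^ m * c := ((hMA_mem _).1 (hwpowMA m) c hcD)
      have hc2 : c * star (w ^ m) = star (w ^ m) * c := by
        rw [hstar_powK, hw_sa]; exact hc1
      have hk := key (w ^ m) hc1 hc2
      have hsw : star (w ^ m) * w ^ m = w ^ (2 * m) := by
        rw [hstar_powK, hw_sa, ← pow_add, two_mul]
      rw [hsw] at hk
      calc u m ^ 2 = ‖(⟪d ((w ^ m) Omh), d ((w ^ m) Omh)⟫ : ℂ)‖ := hsqnorm _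
        _ = ‖(⟪d Omh, d ((w ^ (2 * m)) Omh)⟫ : ℂ)‖ := by rw [hk]
        _ ≤ ‖d Omh‖ * ‖d ((w ^ (2 * m)) Omh)‖ := norm_inner_le_norm _ _
        _ = u 0 * u (2 * m) := by rw [hu0']
    have hwm : ∀ m : ℕ, ‖(w ^ m) Omh‖ ≤ ‖w‖ ^ m := by
      intro m
      induction m with
      | zero => simp only [pow_zero, one_apply_eq_self, hnormOmh, le_refl]
      | succ m ih =>
        rw [pow_succ']
        calc ‖(w * w ^ m) Omh‖ = ‖w ((w ^ m) Omh)‖ := rfl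
          _ ≤ ‖w‖ * ‖(w ^ m) Omh‖ := le_opNorm _ _
          _ ≤ ‖w‖ * ‖w‖ ^ m := mul_le_mul_of_nonneg_left ih (ContinuousLinearMap.opNorm_nonneg _)
          _ = ‖w‖ ^ (m + 1) := by rw [pow_succ']
    have huM : ∀ m, u m ≤ ‖d‖ * ‖w‖ ^ m := by
      intro m
      calc u m ≤ ‖d‖ * ‖(w ^ m) Omh‖ := le_opNorm _ _
        _ ≤ ‖d‖ * ‖w‖ ^ m := mul_le_mul_of_nonneg_left (hwm m) (ContinuousLinearMap.opNorm_nonneg _)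
    have hu1 : u 1 ≤ u 0 * ‖w‖ := aux_iter u ‖d‖ ‖w‖ hu0 (ContinuousLinearMap.opNorm_nonneg _) hucs huM
    have hnormw : ‖w‖ ≤ ‖x‖ ^ 2 := by
      have h1 : ‖star x‖ = ‖x‖ := by
        rw [ContinuousLinearMap.star_eq_adjoint]
        exact LinearIsometryEquiv.norm_map (ContinuousLinearMap.adjoint) x
      calc ‖w‖ = ‖star x * x‖ := by rw [hw_def]
        _ ≤ ‖star x‖ * ‖x‖ := ContinuousLinearMap.opNorm_comp_le (star x) x
        _ = ‖x‖ ^ 2 := by rw [h1, sq]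
    have hcx1 : c * x = x * c := (hMA_mem x).1 hx c hcD
    have hcx2 : c * star x = star x * c := (hMA_mem _).1 (hMA_star x hx) c hcD
    have hk := key x hcx1 hcx2
    have hfinal_sq : ‖ρ b (Ein (x Omh))‖ ^ 2 ≤ (‖x‖ * ‖ιB b‖) ^ 2 := by
      calc ‖ρ b (Ein (x Omh))‖ ^ 2 = ‖(⟪d (x Omh), d (x Omh)⟫ : ℂ)‖ := hsqnorm _
        _ = ‖(⟪d Omh, d (w Omh)⟫ : ℂ)‖ := by rw [hk, hw_def]
        _ = ‖(⟪d Omh, d ((w ^ 1) Omh)⟫ : ℂ)‖ := by rw [pow_one]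
        _ ≤ ‖d Omh‖ * ‖d ((w ^ 1) Omh)‖ := norm_inner_le_norm _ _
        _ = u 0 * u 1 := by rw [hu0']
        _ ≤ u 0 * (u 0 * ‖w‖) := mul_le_mul_of_nonneg_left hu1 (hu0 0)
        _ ≤ u 0 * (u 0 * ‖x‖ ^ 2) := by
            apply mul_le_mul_of_nonneg_left _ (hu0 0)
            exact mul_le_mul_of_nonneg_left hnormw (hu0 0)
        _ = (‖x‖ * ‖ιB b‖) ^ 2 := by rw [hu0eq]; ring
    calc ‖ρ b (Ein (x Omh))‖ = Real.sqrt (‖ρ b (Ein (x Omh))‖ ^ 2) :=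
        (Real.sqrt_sq (norm_nonneg _)).symm
      _ ≤ Real.sqrt ((‖x‖ * ‖ιB b‖) ^ 2) := Real.sqrt_le_sqrt hfinal_sq
      _ = ‖x‖ * ‖ιB b‖ := Real.sqrt_sq
          (mul_nonneg (ContinuousLinearMap.opNorm_nonneg x) (norm_nonneg _))
  -- definition of the extension map
  have hIex : ∀ x : K →L[ℂ] K, ∃ y : H →L[ℂ] H,
      (x ∈ MA → (∀ b, y (ιB b) = ρ b (Ein (x Omh))) ∧ ‖y‖ ≤ ‖x‖) ∧ (x ∉ MA → y = 1) := by
    intro x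
    by_cases hx : x ∈ MA
    · obtain ⟨y, hy1, hy2⟩ := aux_extend ιB hdense hinj
        { toFun := fun b => ρ b (Ein (x Omh))
          map_add' := by
            intro b₁ b₂
            show ρ (b₁ + b₂) (Ein (x Omh)) = ρ b₁ (Ein (x Omh)) + ρ b₂ (Ein (x Omh))
            rw [hρ_add]; rfl
          map_smul' := by
            intro s b
            show ρ (s • b) (Ein (x Omh)) = s • ρ b (Ein (x Omh))
            rw [hρ_smul]; rfl }
        ‖x‖ (ContinuousLinearMap.opNorm_nonneg x) (fun b => hbound x hx b)
      exact ⟨y, fun _ => ⟨hy1, hy2⟩, fun h => absurd hx h⟩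
    · exact ⟨1, fun h => absurd h hx, fun _ => rfl⟩
  choose Iop hIop1 hIop2 using hIex
  have hI_app : ∀ x, x ∈ MA → ∀ b, Iop x (ιB b) = ρ b (Ein (x Omh)) :=
    fun x hx => (hIop1 x hx).1
  have hI_norm : ∀ x, x ∈ MA → ‖Iop x‖ ≤ ‖x‖ := fun x hx => (hIop1 x hx).2
  have hIE : ∀ x, x ∈ MA → ∀ ξ : K, Iop x (Ein ξ) = Ein (x ξ) := by
    intro x hx
    apply aux_dense_prop hdK ((Iop x).continuous.comp Ein.continuous)
      (Ein.continuous.comp x.continuous)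
    intro a
    show Iop x (Ein (KA a)) = Ein (x (KA a))
    rw [hEinKA, hI_app x hx (f a), hEρA, hcommA x hx (ρA a) (hρA_D a) Omh, hρA_Ω]
  have hIΩ : ∀ x, x ∈ MA → Iop x (ιB 1) = Ein (x Omh) := by
    intro x hx
    rw [hI_app x hx 1, hρ_one, one_apply_eq_self]
  have hIρ : ∀ x, x ∈ MA → ∀ b, ∀ v : H, Iop x (ρ b v) = ρ b (Iop x v) := by
    intro x hx b
    apply aux_dense_prop hdense ((Iop x).continuous.comp (ρ b).continuous)
      ((ρ b).continuous.comp (Iop x).continuous)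
    intro b'
    show Iop x (ρ b (ιB b')) = ρ b (Iop x (ιB b'))
    rw [hρ_app, hI_app x hx, hI_app x hx]
    have h := congrArg (fun T : H →L[ℂ] H => T (Ein (x Omh))) (hρ_comp b' b)
    simpa [mul_apply] using h.symm
  have hImul : ∀ x, x ∈ MA → ∀ y, y ∈ MA → Iop (x * y) = Iop x * Iop y := by
    intro x hx y hy
    apply aux_dense_ext hdense
    intro b
    rw [mul_apply_eq_comp, hI_app _ (hMA_mul x hx y hy) b, hI_app y hy b, hIρ x hx b, hIE x hx]
    rfl
  have hIadd : ∀ x, x ∈ MA → ∀ y, y ∈ MA → Iop (x + y) = Iop x + Iop y := by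
    intro x hx y hy
    apply aux_dense_ext hdense
    intro b
    rw [add_apply, hI_app _ (hMA_add x hx y hy) b, hI_app x hx b, hI_app y hy b]
    rw [show (x + y) Omh = x Omh + y Omh from rfl, map_add, map_add]
  have hIsmul : ∀ x, x ∈ MA → ∀ s : ℂ, Iop (s • x) = s • Iop x := by
    intro x hx s
    apply aux_dense_ext hdense
    intro b
    rw [ContinuousLinearMap.smul_apply, hI_app _ (hMA_smul x hx s) b, hI_app x hx b]
    rw [show (s • x) Omh = s • (x Omh) from rfl, map_smul, map_smul]
  have hI1 : Iop 1 = 1 := by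
    apply aux_dense_ext hdense
    intro b
    rw [hI_app 1 hMA_one b, one_apply_eq_self]
    show ρ b (Ein Omh) = ιB b
    have h2 : Ein Omh = ιB 1 := by rw [← hf1]; rfl
    rw [h2, hρ_app, one_mul]
  -- H-space moving helpers
  have hmove_rH : ∀ (T : H →L[ℂ] H) (u v : H), ⟪T u, v⟫ = ⟪u, (star T) v⟫ := by
    intro T u v
    exact (ContinuousLinearMap.adjoint_inner_right T u v).symm
  have hmove_lH : ∀ (T : H →L[ℂ] H) (u v : H), ⟪u, T v⟫ = ⟪(star T) u, v⟫ := by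
    intro T u v
    exact (ContinuousLinearMap.adjoint_inner_left T v u).symm
  have hstar_lamB : ∀ c, star (lamB c) = lamB (star c) :=
    fun c => (ContinuousLinearMap.star_eq_adjoint (lamB c)).trans (hlam_adj c)
  have hstar_ρA : ∀ a, star (ρA a) = ρA (star a) :=
    fun a => (ContinuousLinearMap.star_eq_adjoint (ρA a)).trans (hρA_adj a)
  have hMBA_mem : ∀ y : H →L[ℂ] H, y ∈ MBA ↔
      ∀ z ∈ Set.centralizer (Set.range fun a : A => lamB (f a)), z * y = y * z :=
    fun y => Set.mem_centralizer_iff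
  -- approximating sequences
  have hseq : ∀ ξ : K, ∃ uu : ℕ → A,
      Filter.Tendsto (fun n => KA (uu n)) atTop (nhds ξ) := by
    intro ξ
    have h1 : ∀ n : ℕ, ∃ a : A, dist ξ (KA a) < 1 / (n + 1) := by
      intro n
      obtain ⟨v, ⟨a, rfl⟩, hv⟩ := Metric.mem_closure_iff.1 (hdK ξ) (1 / (n + 1)) (by positivity)
      exact ⟨a, hv⟩
    choose uu huu using h1
    refine ⟨uu, ?_⟩
    rw [tendsto_iff_dist_tendsto_zero]
    apply squeeze_zero (fun n => dist_nonneg) (fun n => ?_)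
      tendsto_one_div_add_atTop_nhds_zero_nat
    rw [dist_comm]
    exact (huu n).le
  have hKAdist : ∀ a a' : A, dist (KA (star a)) (KA (star a')) = dist (KA a) (KA a') := by
    have e1 : ∀ c c' : A, dist (KA c) (KA c') = ‖ιB (f (c - c'))‖ := by
      intro c c'
      rw [Subtype.dist_eq]
      show dist (ιB (f c)) (ιB (f c')) = ‖ιB (f (c - c'))‖
      rw [dist_eq_norm, ← map_sub, ← map_sub f]
    intro a a'
    rw [e1, e1, ← star_sub, map_star, hnorm_star]
  have hstarlim : ∀ x, x ∈ MA → ∀ uu : ℕ → A,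
      Filter.Tendsto (fun n => KA (uu n)) atTop (nhds (x Omh)) →
      Filter.Tendsto (fun n => KA (star (uu n))) atTop (nhds ((star x) Omh)) := by
    intro x hx uu hu
    have hcau : CauchySeq (fun n => KA (star (uu n))) := by
      have h1 : CauchySeq (fun n => KA (uu n)) := hu.cauchySeq
      rw [Metric.cauchySeq_iff] at h1 ⊢
      intro ε hε
      obtain ⟨N, hN⟩ := h1 ε hε
      exact ⟨N, fun m hm n hn => by rw [hKAdist]; exact hN m hm n hn⟩
    obtain ⟨ζ, hζ⟩ := cauchySeq_tendsto_of_complete hcau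
    have hid : ζ = (star x) Omh := by
      apply aux_dense_inner_ext hdK
      intro a
      have hL : Filter.Tendsto (fun n => ⟪KA a, KA (star (uu n))⟫) atTop (nhds ⟪KA a, ζ⟫) :=
        Filter.Tendsto.inner tendsto_const_nhds hζ
      have he : ∀ n, ⟪KA a, KA (star (uu n))⟫ =
          (starRingEnd ℂ) ⟪KA (star a), KA (uu n)⟫ := by
        intro n
        rw [hinnerKA, hinnerKA, star_star, ← htstarA, star_mul]
        exact htAtr _ _
      have hconv2 : Filter.Tendsto (fun n => (starRingEnd ℂ) ⟪KA (star a), KA (uu n)⟫)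
          atTop (nhds ((starRingEnd ℂ) ⟪KA (star a), x Omh⟫)) :=
        (Complex.continuous_conj.tendsto _).comp
          (Filter.Tendsto.inner tendsto_const_nhds hu)
      have heq : (starRingEnd ℂ) ⟪KA (star a), x Omh⟫ = ⟪KA a, (star x) Omh⟫ := by
        calc (starRingEnd ℂ) ⟪KA (star a), x Omh⟫ = ⟪x Omh, KA (star a)⟫ :=
            inner_conj_symm _ _
          _ = ⟪x Omh, ρA (star a) Omh⟫ := by rw [hρA_Ω]
          _ = ⟪(star (ρA (star a))) (x Omh), Omh⟫ := hmove_l _ _ _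
          _ = ⟪ρA a (x Omh), Omh⟫ := by rw [hstar_ρA, star_star]
          _ = ⟪x (ρA a Omh), Omh⟫ := by rw [hcommA x hx (ρA a) (hρA_D a) Omh]
          _ = ⟪x (KA a), Omh⟫ := by rw [hρA_Ω]
          _ = ⟪KA a, (star x) Omh⟫ := hmove_r _ _ _
      have hR : Filter.Tendsto (fun n => ⟪KA a, KA (star (uu n))⟫) atTop
          (nhds ⟪KA a, (star x) Omh⟫) := by
        rw [← heq]
        exact hconv2.congr (fun n => (he n).symm)
      exact (tendsto_nhds_unique hL hR)
    rw [← hid]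
    exact hζ
  -- tendsto helper
  have hTgen : ∀ (b0 : B) (vv : ℕ → A) (ξ0 : K),
      Filter.Tendsto (fun n => KA (vv n)) atTop (nhds ξ0) →
      Filter.Tendsto (fun n => ιB (f (vv n) * b0)) atTop (nhds (ρ b0 (Ein ξ0))) := by
    intro b0 vv ξ0 hv
    have h1 : Filter.Tendsto (fun n => ρ b0 (Ein (KA (vv n)))) atTop
        (nhds (ρ b0 (Ein ξ0))) :=
      (((ρ b0).continuous.comp Ein.continuous).tendsto _).comp hv
    apply h1.congr
    intro n
    rw [hEinKA, hρ_app]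
  -- star compatibility
  have hIstar : ∀ x, x ∈ MA → Iop (star x) = star (Iop x) := by
    intro x hx
    rw [ContinuousLinearMap.star_eq_adjoint]
    apply aux_adj hdense
    intro bi bj
    obtain ⟨uu, hu⟩ := hseq (x Omh)
    have hsu := hstarlim x hx uu hu
    have hL : Filter.Tendsto (fun n => ⟪ιB (f (star (uu n)) * bi), ιB bj⟫) atTop
        (nhds ⟪Iop (star x) (ιB bi), ιB bj⟫) := by
      rw [hI_app (star x) (hMA_star x hx) bi]
      exact Filter.Tendsto.inner (hTgen bi (fun n => star (uu n)) _ hsu) tendsto_const_nhds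
    have hR : Filter.Tendsto (fun n => ⟪ιB bi, ιB (f (uu n) * bj)⟫) atTop
        (nhds ⟪ιB bi, Iop x (ιB bj)⟫) := by
      rw [hI_app x hx bj]
      exact Filter.Tendsto.inner tendsto_const_nhds (hTgen bj uu _ hu)
    have he : ∀ n, ⟪ιB (f (star (uu n)) * bi), ιB bj⟫ = ⟪ιB bi, ιB (f (uu n) * bj)⟫ := by
      intro n
      rw [hip, hip, star_mul, ← map_star, star_star, mul_assoc]
    exact tendsto_nhds_unique hL (hR.congr (fun n => (he n).symm))
  -- membership in MBA
  have hI_MBA : ∀ x, x ∈ MA → Iop x ∈ MBA := by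
    intro x hx
    rw [hMBA_mem]
    intro z hz
    have hzlam : ∀ a (v : H), z (lamB (f a) v) = lamB (f a) (z v) := by
      intro a v
      have h := hz (lamB (f a)) ⟨a, rfl⟩
      calc z (lamB (f a) v) = (z * lamB (f a)) v := rfl
        _ = (lamB (f a) * z) v := by rw [h]
        _ = lamB (f a) (z v) := rfl
    apply aux_dense_ext hdense
    intro b
    rw [mul_apply_eq_comp, mul_apply_eq_comp]
    apply aux_dense_inner_ext hdense
    intro b'
    obtain ⟨uu, hu⟩ := hseq (x Omh)
    have hsu := hstarlim x hx uu hu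
    have s1 : Filter.Tendsto (fun n => ⟪ιB (f (star (uu n)) * b'), z (ιB b)⟫) atTop
        (nhds ⟪ρ b' (Ein ((star x) Omh)), z (ιB b)⟫) :=
      Filter.Tendsto.inner (hTgen b' (fun n => star (uu n)) _ hsu) tendsto_const_nhds
    have s2 : Filter.Tendsto (fun n => ⟪ιB b', z (ιB (f (uu n) * b))⟫) atTop
        (nhds ⟪ιB b', z (Iop x (ιB b))⟫) := by
      rw [hI_app x hx b]
      exact Filter.Tendsto.inner tendsto_const_nhds
        ((z.continuous.tendsto _).comp (hTgen b uu _ hu))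
    have he : ∀ n, ⟪ιB b', z (ιB (f (uu n) * b))⟫ =
        ⟪ιB (f (star (uu n)) * b'), z (ιB b)⟫ := by
      intro n
      calc ⟪ιB b', z (ιB (f (uu n) * b))⟫
          = ⟪ιB b', z (lamB (f (uu n)) (ιB b))⟫ := by rw [hlamB]
        _ = ⟪ιB b', lamB (f (uu n)) (z (ιB b))⟫ := by rw [hzlam]
        _ = ⟪(star (lamB (f (uu n)))) (ιB b'), z (ιB b)⟫ := hmove_lH _ _ _
        _ = ⟪lamB (f (star (uu n))) (ιB b'), z (ιB b)⟫ := by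
            rw [hstar_lamB, ← map_star]
        _ = ⟪ιB (f (star (uu n)) * b'), z (ιB b)⟫ := by rw [hlamB]
    have e1 : ⟪ιB b', z (Iop x (ιB b))⟫ = ⟪ρ b' (Ein ((star x) Omh)), z (ιB b)⟫ :=
      tendsto_nhds_unique (s2.congr (fun n => he n)) s1
    have e2 : ⟪ιB b', Iop x (z (ιB b))⟫ = ⟪ρ b' (Ein ((star x) Omh)), z (ιB b)⟫ := by
      calc ⟪ιB b', Iop x (z (ιB b))⟫ = ⟪(star (Iop x)) (ιB b'), z (ιB b)⟫ := hmove_lH _ _ _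
        _ = ⟪Iop (star x) (ιB b'), z (ιB b)⟫ := by rw [hIstar x hx]
        _ = ⟪ρ b' (Ein ((star x) Omh)), z (ιB b)⟫ := by
            rw [hI_app (star x) (hMA_star x hx) b']
    rw [e1, e2]
  -- injectivity
  have hEinj : ∀ ξ η : K, Ein ξ = Ein η → ξ = η := fun ξ η h => Subtype.ext h
  have hInj : Set.InjOn Iop MA := by
    intro x hx y hy hxy
    have h1 : Ein (x Omh) = Ein (y Omh) := by
      rw [← hIΩ x hx, ← hIΩ y hy, hxy]
    have h2 : x Omh = y Omh := hEinj _ _ h1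
    apply aux_dense_ext hdK
    intro a
    calc x (KA a) = x (ρA a Omh) := by rw [hρA_Ω]
      _ = ρA a (x Omh) := (hcommA x hx (ρA a) (hρA_D a) Omh).symm
      _ = ρA a (y Omh) := by rw [h2]
      _ = y (ρA a Omh) := hcommA y hy (ρA a) (hρA_D a) Omh
      _ = y (KA a) := by rw [hρA_Ω]
  have hIlamA : ∀ a, Iop (lamA a) = lamB (f a) := by
    intro a
    apply aux_dense_ext hdense
    intro b
    rw [hI_app _ (hlamA_MA a) b, hlamA_Ω, hEinKA, hρ_app, hlamB]
  -- surjectivity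
  have hρ_S : ∀ b, ρ b ∈ Set.centralizer (Set.range fun a : A => lamB (f a)) := by
    intro b
    rw [Set.mem_centralizer_iff]
    rintro _ ⟨a, rfl⟩
    exact (hρ_lam b (f a)).symm
  have hEzP_S : ∀ z ∈ Set.centralizer (Set.range lamA),
      (Ein ∘L (z ∘L Pr)) ∈ Set.centralizer (Set.range fun a : A => lamB (f a)) := by
    intro z hz
    rw [Set.mem_centralizer_iff]
    rintro _ ⟨a, rfl⟩
    apply ContinuousLinearMap.ext
    intro v
    rw [mul_apply_eq_comp, mul_apply_eq_comp]
    show lamB (f a) (Ein (z (Pr v))) = Ein (z (Pr (lamB (f a) v)))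
    rw [hPrlam, ← hEinlam]
    congr 1
    have h := hz (lamA a) ⟨a, rfl⟩
    calc lamA a (z (Pr v)) = (lamA a * z) (Pr v) := rfl
      _ = (z * lamA a) (Pr v) := by rw [h]
      _ = z (lamA a (Pr v)) := rfl
  have hone_D : (1 : K →L[ℂ] K) ∈ Set.centralizer (Set.range lamA) := by
    rw [Set.mem_centralizer_iff]; intro m _; rw [mul_one, one_mul]
  have hEP_S : (Ein ∘L Pr) ∈ Set.centralizer (Set.range fun a : A => lamB (f a)) := by
    have h := hEzP_S 1 hone_D
    have e : Ein ∘L ((1 : K →L[ℂ] K) ∘L Pr) = Ein ∘L Pr := by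
      apply ContinuousLinearMap.ext; intro v; rfl
    rw [← e]; exact h
  have hsurj : ∀ y : H →L[ℂ] H, y ∈ MBA → ∃ x, x ∈ MA ∧ Iop x = y := by
    intro y hy
    have hyz : ∀ z ∈ Set.centralizer (Set.range fun a : A => lamB (f a)),
        ∀ v, z (y v) = y (z v) := by
      intro z hz v
      have h := (hMBA_mem y).1 hy z hz
      calc z (y v) = (z * y) v := rfl
        _ = (y * z) v := by rw [h]
        _ = y (z v) := rfl
    set x : K →L[ℂ] K := Pr ∘L (y ∘L Ein) with hx_def
    have hxMA : x ∈ MA := by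
      rw [hMA_mem]
      intro z hz
      apply ContinuousLinearMap.ext
      intro ξ
      rw [mul_apply_eq_comp, mul_apply_eq_comp]
      show z (Pr (y (Ein ξ))) = Pr (y (Ein (z ξ)))
      have e1 : Ein (z ξ) = (Ein ∘L (z ∘L Pr)) (Ein ξ) := by
        show Ein (z ξ) = Ein (z (Pr (Ein ξ)))
        rw [hPrEin]
      rw [e1, ← hyz _ (hEzP_S z hz) (Ein ξ)]
      show z (Pr (y (Ein ξ))) = Pr (Ein (z (Pr (y (Ein ξ)))))
      rw [hPrEin]
    refine ⟨x, hxMA, ?_⟩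
    apply aux_dense_ext hdense
    intro b
    rw [hI_app x hxMA b]
    have e2 : Ein (x Omh) = y (ιB 1) := by
      have e3 : (Ein ∘L Pr) (y (Ein Omh)) = y ((Ein ∘L Pr) (Ein Omh)) := hyz _ hEP_S _
      calc Ein (x Omh) = (Ein ∘L Pr) (y (Ein Omh)) := rfl
        _ = y ((Ein ∘L Pr) (Ein Omh)) := e3
        _ = y (Ein (Pr (Ein Omh))) := rfl
        _ = y (Ein Omh) := by rw [hPrEin]
        _ = y (ιB 1) := by rw [show Ein Omh = ιB 1 from by rw [← hf1]; rfl]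
    rw [e2]
    calc ρ b (y (ιB 1)) = y (ρ b (ιB 1)) := hyz (ρ b) (hρ_S b) (ιB 1)
      _ = y (ιB b) := by rw [hρ_app, one_mul]
  have hImage : Iop '' MA = MBA := by
    apply Set.eq_of_subset_of_subset
    · rintro _ ⟨x, hx, rfl⟩
      exact hI_MBA x hx
    · intro y hy
      obtain ⟨x, hx, hxy⟩ := hsurj y hy
      exact ⟨x, hx, hxy⟩
  -- normality
  have hNormal : ∀ (It : Type) (l : Filter It) (xs : It → K →L[ℂ] K) (x₀ : K →L[ℂ] K),
      (∀ i, xs i ∈ MA) → x₀ ∈ MA → (∃ C : ℝ, ∀ i, ‖xs i‖ ≤ C) →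
      (∀ ξ η : K, Filter.Tendsto (fun i => ⟪ξ, xs i η⟫) l (nhds ⟪ξ, x₀ η⟫)) →
      ∀ ξ η : H, Filter.Tendsto (fun i => ⟪ξ, Iop (xs i) η⟫) l (nhds ⟪ξ, Iop x₀ η⟫) := by
    rintro It l xs x₀ hxs hx₀ ⟨C, hC⟩ hconv ξ η
    set Cb : ℝ := max C ‖x₀‖ with hCb
    have hCb0 : 0 ≤ Cb := le_trans (norm_nonneg x₀) (le_max_right _ _)
    have hbnd : ∀ i, ‖Iop (xs i)‖ ≤ Cb :=
      fun i => le_trans (hI_norm _ (hxs i)) (le_trans (hC i) (le_max_left _ _))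
    have hbnd0 : ‖Iop x₀‖ ≤ Cb := le_trans (hI_norm _ hx₀) (le_max_right _ _)
    have stepA : ∀ b : B, Filter.Tendsto (fun i => ⟪ξ, Iop (xs i) (ιB b)⟫) l
        (nhds ⟪ξ, Iop x₀ (ιB b)⟫) := by
      intro b
      have hrw : ∀ (x : K →L[ℂ] K), x ∈ MA →
          ⟪ξ, Iop x (ιB b)⟫ = ⟪Pr ((star (ρ b)) ξ), x Omh⟫ := by
        intro x hx
        rw [hI_app x hx b, hmove_lH (ρ b) ξ (Ein (x Omh)), hinnerPE]
      have h1 := hconv (Pr ((star (ρ b)) ξ)) Omh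
      rw [show (⟪ξ, Iop x₀ (ιB b)⟫ : ℂ) = ⟪Pr ((star (ρ b)) ξ), x₀ Omh⟫ from hrw x₀ hx₀]
      exact h1.congr (fun i => (hrw (xs i) (hxs i)).symm)
    rw [Metric.tendsto_nhds]
    intro ε hε
    set δ : ℝ := ε / (4 * (‖ξ‖ * Cb + 1)) with hδ
    have hd1 : (0:ℝ) < ‖ξ‖ * Cb + 1 := by positivity
    have hδ0 : 0 < δ := by rw [hδ]; positivity
    obtain ⟨v, ⟨b, rfl⟩, hvb⟩ := Metric.mem_closure_iff.1 (hdense η) δ hδ0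
    have hmid := (Metric.tendsto_nhds.1 (stepA b)) (ε / 2) (half_pos hε)
    apply hmid.mono
    intro i hi
    have hbound2 : ∀ (T : H →L[ℂ] H), ‖T‖ ≤ Cb →
        ‖(⟪ξ, T η⟫ : ℂ) - ⟪ξ, T (ιB b)⟫‖ ≤ ‖ξ‖ * Cb * δ := by
      intro T hT
      have e : (⟪ξ, T η⟫ : ℂ) - ⟪ξ, T (ιB b)⟫ = ⟪ξ, T (η - ιB b)⟫ := by
        rw [map_sub, inner_sub_right]
      rw [e]
      calc ‖(⟪ξ, T (η - ιB b)⟫ : ℂ)‖ ≤ ‖ξ‖ * ‖T (η - ιB b)‖ := norm_inner_le_norm _ _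
        _ ≤ ‖ξ‖ * (‖T‖ * ‖η - ιB b‖) :=
            mul_le_mul_of_nonneg_left (le_opNorm _ _) (norm_nonneg _)
        _ ≤ ‖ξ‖ * (Cb * δ) := by
            apply mul_le_mul_of_nonneg_left _ (norm_nonneg _)
            apply mul_le_mul hT _ (norm_nonneg _) hCb0
            rw [← dist_eq_norm]
            exact le_of_lt hvb
        _ = ‖ξ‖ * Cb * δ := by ring
    have hδle : ‖ξ‖ * Cb * δ ≤ ε / 4 := by
      have h2 : (‖ξ‖ * Cb + 1) * δ = ε / 4 := by
        rw [hδ]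
        field_simp
      have h3 : ‖ξ‖ * Cb * δ ≤ (‖ξ‖ * Cb + 1) * δ := by
        apply mul_le_mul_of_nonneg_right _ (le_of_lt hδ0)
        linarith
      linarith
    have dec : (⟪ξ, Iop (xs i) η⟫ : ℂ) - ⟪ξ, Iop x₀ η⟫ =
        ((⟪ξ, Iop (xs i) η⟫ : ℂ) - ⟪ξ, Iop (xs i) (ιB b)⟫) +
        ((⟪ξ, Iop (xs i) (ιB b)⟫ : ℂ) - ⟪ξ, Iop x₀ (ιB b)⟫) +
        ((⟪ξ, Iop x₀ (ιB b)⟫ : ℂ) - ⟪ξ, Iop x₀ η⟫) := by ring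
    rw [dist_eq_norm] at hi ⊢
    calc ‖(⟪ξ, Iop (xs i) η⟫ : ℂ) - ⟪ξ, Iop x₀ η⟫‖
        = ‖((⟪ξ, Iop (xs i) η⟫ : ℂ) - ⟪ξ, Iop (xs i) (ιB b)⟫) +
          ((⟪ξ, Iop (xs i) (ιB b)⟫ : ℂ) - ⟪ξ, Iop x₀ (ιB b)⟫) +
          ((⟪ξ, Iop x₀ (ιB b)⟫ : ℂ) - ⟪ξ, Iop x₀ η⟫)‖ := by rw [← dec]
      _ ≤ ‖(⟪ξ, Iop (xs i) η⟫ : ℂ) - ⟪ξ, Iop (xs i) (ιB b)⟫‖ +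
          ‖(⟪ξ, Iop (xs i) (ιB b)⟫ : ℂ) - ⟪ξ, Iop x₀ (ιB b)⟫‖ +
          ‖(⟪ξ, Iop x₀ (ιB b)⟫ : ℂ) - ⟪ξ, Iop x₀ η⟫‖ := norm_add₃_le
      _ ≤ ‖ξ‖ * Cb * δ + ‖(⟪ξ, Iop (xs i) (ιB b)⟫ : ℂ) - ⟪ξ, Iop x₀ (ιB b)⟫‖ +
          ‖ξ‖ * Cb * δ := by
          have t1 := hbound2 (Iop (xs i)) (hbnd i)
          have t3 : ‖(⟪ξ, Iop x₀ (ιB b)⟫ : ℂ) - ⟪ξ, Iop x₀ η⟫‖ ≤ ‖ξ‖ * Cb * δ := by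
            rw [norm_sub_rev]
            exact hbound2 (Iop x₀) hbnd0
          linarith
      _ < ε := by
          have := hδle
          linarith
  -- assembly
  constructor
  · refine ⟨Iop, hI1, ?_, ?_, ?_, hInj, hIlamA, hImage, hNormal, ?_⟩
    · intro x hx y hy
      exact ⟨hImul x hx y hy, hIadd x hx y hy⟩
    · intro x hx c
      exact hIsmul x hx c
    · intro x hx
      exact hIstar x hx
    · intro x hx
      rw [hIΩ x hx]
      rfl
  · intro I₁ I₂ h₁ h₂ x hx
    have huniq : ∀ I', Good I' → ∀ x, x ∈ MA → I' x = Iop x := by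
      intro I' hG x hx
      obtain ⟨g1, g2, g3, g4, g5, g6, g7, g8, g9⟩ := hG
      have hyM : I' x ∈ MBA := by rw [← g7]; exact Set.mem_image_of_mem I' hx
      have hyΩ : I' x (ιB 1) = Ein (x Omh) := g9 x hx
      have hyz : ∀ z ∈ Set.centralizer (Set.range fun a : A => lamB (f a)),
          ∀ v, z (I' x v) = I' x (z v) := by
        intro z hz v
        have h := (hMBA_mem _).1 hyM z hz
        calc z (I' x v) = (z * I' x) v := rfl
          _ = (I' x * z) v := by rw [h]
          _ = I' x (z v) := rfl
      apply aux_dense_ext hdense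
      intro b
      calc I' x (ιB b) = I' x (ρ b (ιB 1)) := by rw [hρ_app, one_mul]
        _ = ρ b (I' x (ιB 1)) := (hyz (ρ b) (hρ_S b) (ιB 1)).symm
        _ = ρ b (Ein (x Omh)) := by rw [hyΩ]
        _ = Iop x (ιB b) := (hI_app x hx b).symm
    rw [huniq I₁ h₁ x hx, huniq I₂ h₂ x hx]
end Helpers
end

section
/- Let H be a Hilbert space that is the orthogonal direct sum ⊕_{n≥k} P_n of finite-dimensional subspaces, and let a be a bounded operator such that a maps each P_n into the span of P_t for |n-m|+k ≤ t ≤ n+m-k, with ||(a b)_t|| ≤ K ||b|| for each component whenever b ∈ P_n. Then for all b ∈ ⊕_{n≥k} P_n (algebraic direct sum), ||a b|| ≤ K(1 + 2(m-k)) ||b||. -/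
open Finset in
/-- Pythagoras for a finite family of pairwise-orthogonal vectors. -/
lemma stmt14_pyth {H : Type*} [NormedAddCommGroup H] [InnerProductSpace ℂ H]
    {ι : Type*} (s : Finset ι) (v : ι → H)
    (h : ∀ i ∈ s, ∀ j ∈ s, i ≠ j → (inner ℂ (v i) (v j) : ℂ) = 0) :
    ‖∑ i ∈ s, v i‖ ^ 2 = ∑ i ∈ s, ‖v i‖ ^ 2 := by
  classical
  have key : (inner ℂ (∑ i ∈ s, v i) (∑ i ∈ s, v i) : ℂ) = ∑ i ∈ s, inner ℂ (v i) (v i) := by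
    rw [sum_inner]
    refine Finset.sum_congr rfl fun i hi => ?_
    rw [inner_sum, Finset.sum_eq_single i (fun j hj hji => h i hi j hj (Ne.symm hji))
      (fun hi' => absurd hi hi')]
  have h2 : ∀ w : H, RCLike.re (inner ℂ w w : ℂ) = ‖w‖ ^ 2 := fun w => inner_self_eq_norm_sq w
  rw [← h2, key, map_sum]
  exact Finset.sum_congr rfl fun i _ => h2 (v i)

lemma stmt14_decomp {H : Type*} [NormedAddCommGroup H] [InnerProductSpace ℂ H] [CompleteSpace H]
    (P : ℕ → Submodule ℂ H) [∀ n, FiniteDimensional ℂ (P n)]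
    (horth : ∀ i j : ℕ, i ≠ j → ∀ v ∈ P i, ∀ w ∈ P j, (inner ℂ v w : ℂ) = 0)
    (S : Set ℕ) (x : H) (hx : x ∈ ⨆ t ∈ S, P t) :
    ∃ g : ℕ →₀ H, (∀ t, g t ∈ P t) ∧ (∀ t ∉ S, g t = 0) ∧ (g.sum fun _ y => y) = x ∧
      (∀ t, (((P t).orthogonalProjection x : P t) : H) = g t) := by
  classical
  rw [Submodule.mem_iSup_iff_exists_finsupp] at hx
  obtain ⟨g, hg, hsum⟩ := hx
  have hgP : ∀ t, g t ∈ P t := by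
    intro t
    by_cases ht : t ∈ S
    · have := hg t; rwa [iSup_pos ht] at this
    · have h0 : g t = 0 := by have := hg t; rwa [iSup_neg ht, Submodule.mem_bot] at this
      rw [h0]; exact (P t).zero_mem
  have hgS : ∀ t ∉ S, g t = 0 := by
    intro t ht
    have := hg t; rwa [iSup_neg ht, Submodule.mem_bot] at this
  refine ⟨g, hgP, hgS, hsum, fun t => ?_⟩
  have : ((P t).orthogonalProjection x : H) =
      ∑ t' ∈ g.support, (((P t).orthogonalProjection (g t') : P t) : H) := by
    rw [← hsum, Finsupp.sum, map_sum, Submodule.coe_sum]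
  rw [this, Finset.sum_eq_single t]
  · exact Submodule.starProjection_eq_self_iff.mpr (hgP t)
  · intro t' _ htt'
    have hmem : g t' ∈ (P t)ᗮ := by
      rw [Submodule.mem_orthogonal]
      intro u hu
      exact horth t t' (Ne.symm htt') u hu (g t') (hgP t')
    rw [Submodule.orthogonalProjectionOnto_apply_of_mem_orthogonal hmem]
    simp
  · intro ht
    have h0 : g t = 0 := Finsupp.notMem_support_iff.mp ht
    rw [h0]
    simp

/-- Let `H` be a Hilbert space which is the orthogonal direct sum of finite-dimensional
subspaces `P_n` (`n ≥ k`), and let `a` be a bounded operator mapping each `P_n` into the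
(algebraic) span of the `P_t` with `|n-m|+k ≤ t ≤ n+m-k`, with component bounds
`‖(a b)_t‖ ≤ K ‖b‖` for `b ∈ P_n`.  Then for every `b` in the algebraic direct sum
`⊕_{n ≥ k} P_n`, one has `‖a b‖ ≤ K (1 + 2(m-k)) ‖b‖`. -/
theorem stmt14 (H : Type*) [NormedAddCommGroup H] [InnerProductSpace ℂ H] [CompleteSpace H]
    (k m : ℕ) (hkm : k ≤ m)
    (P : ℕ → Submodule ℂ H) [∀ n, FiniteDimensional ℂ (P n)]
    (horth : ∀ i j : ℕ, i ≠ j → ∀ v ∈ P i, ∀ w ∈ P j, (inner ℂ v w : ℂ) = 0)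
    (K : ℝ) (hK : 0 < K) (a : H →L[ℂ] H)
    (hband : ∀ n : ℕ, k ≤ n → ∀ b ∈ P n,
      a b ∈ ⨆ t ∈ {t : ℕ | |(n : ℤ) - (m : ℤ)| + k ≤ t ∧ (t : ℤ) ≤ n + m - k}, P t)
    (hcomp : ∀ n : ℕ, k ≤ n → ∀ b ∈ P n, ∀ t : ℕ,
      ‖((P t).orthogonalProjection (a b) : P t)‖ ≤ K * ‖b‖) :
    ∀ b ∈ ⨆ n ∈ {n : ℕ | k ≤ n}, P n,
      ‖a b‖ ≤ K * (1 + 2 * ((m : ℝ) - (k : ℝ))) * ‖b‖ := by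
  classical
  intro b hb
  rw [Submodule.mem_iSup_iff_exists_finsupp] at hb
  obtain ⟨f, hf, hsum⟩ := hb
  have hfP : ∀ n, f n ∈ P n := by
    intro n
    by_cases hn : k ≤ n
    · have := hf n; rwa [iSup_pos (show n ∈ {n : ℕ | k ≤ n} from hn)] at this
    · have h0 : f n = 0 := by
        have := hf n; rwa [iSup_neg (show n ∉ {n : ℕ | k ≤ n} from hn), Submodule.mem_bot] at this
      rw [h0]; exact (P n).zero_mem
  have hfk : ∀ n ∈ f.support, k ≤ n := by
    intro n hn
    by_contra hn'
    have h0 : f n = 0 := by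
      have := hf n; rwa [iSup_neg (show n ∉ {n : ℕ | k ≤ n} from hn'), Submodule.mem_bot] at this
    exact Finsupp.mem_support_iff.mp hn h0
  set s : Finset ℕ := f.support with hs
  set J : Finset ℤ := Finset.Icc ((k : ℤ) - m) ((m : ℤ) - k) with hJ
  set d : ℕ → ℤ → H := fun n j =>
    if h : 0 ≤ (n : ℤ) + j then
      (((P ((n : ℤ) + j).toNat).orthogonalProjection (a (f n)) : P ((n : ℤ) + j).toNat) : H)
    else 0 with hd
  have hdmem : ∀ (n : ℕ) (j : ℤ), d n j ∈ P (((n : ℤ) + j).toNat) := by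
    intro n j
    simp only [hd]
    by_cases h : 0 ≤ (n : ℤ) + j
    · rw [dif_pos h]; exact Submodule.coe_mem _
    · rw [dif_neg h]; exact (P _).zero_mem
  have hdnorm : ∀ n ∈ s, ∀ j : ℤ, ‖d n j‖ ≤ K * ‖f n‖ := by
    intro n hn j
    simp only [hd]
    by_cases h : 0 ≤ (n : ℤ) + j
    · rw [dif_pos h]
      exact hcomp n (hfk n hn) (f n) (hfP n) _
    · rw [dif_neg h, norm_zero]
      positivity
  -- band decomposition of a (f n)
  have hA : ∀ n ∈ s, a (f n) = ∑ j ∈ J, d n j := by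
    intro n hn
    obtain ⟨g, hgP, hgS, hgsum, hgproj⟩ := stmt14_decomp P horth _ _
      (hband n (hfk n hn) (f n) (hfP n))
    set T : Finset ℤ := J.filter (fun j => 0 ≤ (n : ℤ) + j) with hT
    have step1 : ∑ j ∈ J, d n j = ∑ j ∈ T, g (((n : ℤ) + j).toNat) := by
      rw [← Finset.sum_filter_add_sum_filter_not J (fun j => 0 ≤ (n : ℤ) + j)]
      have e1 : ∑ j ∈ T, d n j = ∑ j ∈ T, g (((n : ℤ) + j).toNat) := by
        refine Finset.sum_congr rfl fun j hj => ?_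
        have hj' := (Finset.mem_filter.mp hj).2
        simp only [hd]
        rw [dif_pos hj', hgproj]
      have e2 : ∑ j ∈ J.filter (fun j => ¬ 0 ≤ (n : ℤ) + j), d n j = 0 := by
        refine Finset.sum_eq_zero fun j hj => ?_
        have hj' := (Finset.mem_filter.mp hj).2
        simp only [hd]
        rw [dif_neg hj']
      rw [e1, e2, add_zero]
    have hinj : ∀ j ∈ T, ∀ j' ∈ T, ((n : ℤ) + j).toNat = ((n : ℤ) + j').toNat → j = j' := by
      intro j hj j' hj' he
      have h1 := (Finset.mem_filter.mp hj).2
      have h2 := (Finset.mem_filter.mp hj').2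
      have : (n : ℤ) + j = (n : ℤ) + j' := by
        rw [← Int.toNat_of_nonneg h1, ← Int.toNat_of_nonneg h2, he]
      omega
    have step2 : ∑ j ∈ T, g (((n : ℤ) + j).toNat) =
        ∑ t ∈ T.image (fun j => ((n : ℤ) + j).toNat), g t :=
      (Finset.sum_image hinj).symm
    have hsub : g.support ⊆ T.image (fun j => ((n : ℤ) + j).toNat) := by
      intro t ht
      have hgt : g t ≠ 0 := Finsupp.mem_support_iff.mp ht
      have htS : t ∈ {t : ℕ | |(n : ℤ) - (m : ℤ)| + k ≤ t ∧ (t : ℤ) ≤ n + m - k} := by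
        by_contra h
        exact hgt (hgS t h)
      obtain ⟨hlo, hhi⟩ := htS
      have habs : (n : ℤ) - m ≤ |(n : ℤ) - m| := le_abs_self _
      refine Finset.mem_image.mpr ⟨(t : ℤ) - n, ?_, ?_⟩
      · refine Finset.mem_filter.mpr ⟨Finset.mem_Icc.mpr ⟨?_, ?_⟩, ?_⟩ <;> omega
      · omega
    have step3 : ∑ t ∈ T.image (fun j => ((n : ℤ) + j).toNat), g t = a (f n) := by
      rw [← hgsum, Finsupp.sum]
      exact (Finset.sum_subset hsub (fun t _ ht => Finsupp.notMem_support_iff.mp ht)).symm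
    rw [step1, step2, step3]
  -- pairwise orthogonality for fixed offset j
  have hdorth : ∀ j : ℤ, ∀ n ∈ s, ∀ n' ∈ s, n ≠ n' →
      (inner ℂ (d n j) (d n' j) : ℂ) = 0 := by
    intro j n _ n' _ hne
    by_cases h1 : 0 ≤ (n : ℤ) + j
    · by_cases h2 : 0 ≤ (n' : ℤ) + j
      · have hne' : ((n : ℤ) + j).toNat ≠ ((n' : ℤ) + j).toNat := by omega
        exact horth _ _ hne' _ (hdmem n j) _ (hdmem n' j)
      · have : d n' j = 0 := by simp only [hd]; rw [dif_neg h2]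
        rw [this, inner_zero_right]
    · have : d n j = 0 := by simp only [hd]; rw [dif_neg h1]
      rw [this, inner_zero_left]
  -- norm of b
  have hb2 : ‖b‖ ^ 2 = ∑ n ∈ s, ‖f n‖ ^ 2 := by
    rw [← hsum, Finsupp.sum]
    exact stmt14_pyth s (fun n => f n) (fun i hi j hj hij => horth i j hij _ (hfP i) _ (hfP j))
  -- the key per-offset bound
  have hjbound : ∀ j ∈ J, ‖∑ n ∈ s, d n j‖ ≤ K * ‖b‖ := by
    intro j _
    have hsq : ‖∑ n ∈ s, d n j‖ ^ 2 ≤ (K * ‖b‖) ^ 2 := by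
      rw [stmt14_pyth s (fun n => d n j) (fun i hi i' hi' hii' => hdorth j i hi i' hi' hii')]
      calc ∑ n ∈ s, ‖d n j‖ ^ 2 ≤ ∑ n ∈ s, (K * ‖f n‖) ^ 2 := by
            refine Finset.sum_le_sum fun n hn => ?_
            have := hdnorm n hn j
            have h0 : (0:ℝ) ≤ ‖d n j‖ := norm_nonneg _
            nlinarith
        _ = K ^ 2 * ∑ n ∈ s, ‖f n‖ ^ 2 := by rw [Finset.mul_sum]; ring_nf
        _ = (K * ‖b‖) ^ 2 := by rw [hb2.symm]; ring
    exact (pow_le_pow_iff_left₀ (norm_nonneg _) (by positivity) two_ne_zero).mp hsq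
  -- assemble
  have hab : a b = ∑ j ∈ J, ∑ n ∈ s, d n j := by
    have : a b = ∑ n ∈ s, a (f n) := by
      rw [← hsum, Finsupp.sum, map_sum]
    rw [this, Finset.sum_congr rfl hA, Finset.sum_comm]
  have hcard : (J.card : ℝ) = 1 + 2 * ((m : ℝ) - (k : ℝ)) := by
    rw [hJ, Int.card_Icc]
    have h1 : ((m : ℤ) - k + 1 - ((k : ℤ) - m)).toNat = 2 * (m - k) + 1 := by omega
    rw [h1]
    push_cast [hkm]
    ring
  calc ‖a b‖ = ‖∑ j ∈ J, ∑ n ∈ s, d n j‖ := by rw [hab]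
    _ ≤ ∑ j ∈ J, ‖∑ n ∈ s, d n j‖ := norm_sum_le _ _
    _ ≤ ∑ _j ∈ J, K * ‖b‖ := Finset.sum_le_sum hjbound
    _ = (J.card : ℝ) * (K * ‖b‖) := by rw [Finset.sum_const, nsmul_eq_mul]
    _ = K * (1 + 2 * ((m : ℝ) - (k : ℝ))) * ‖b‖ := by rw [hcard]; ring
end

section
/- Let A be a finite pre-von Neumann algebra with completion H, vacuum vector Ω, representations λ, ρ, and modular conjugation J (the bounded conjugate-linear extension of aΩ ↦ a*Ω). Then for every x' in the commutant of λ(A)'' or of ρ(A)'', one has J x' Ω = x'* Ω. -/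
/-- Let `A` be a finite pre-von Neumann algebra realized by its GNS embedding
`ι : A → H` with vacuum vector `Ω = ι 1`, representations `λ, ρ`, and modular
conjugation `J` (the bounded conjugate-linear extension of `aΩ ↦ a*Ω`).  Then for
every `x'` in the commutant of `λ(A)''` or of `ρ(A)''`, one has `J x' Ω = x'* Ω`. -/
theorem stmt18 (A : Type*) [Ring A] [Algebra ℂ A] [StarRing A]
    (H : Type*) [NormedAddCommGroup H] [InnerProductSpace ℂ H] [CompleteSpace H]
    (t : A →ₗ[ℂ] ℂ) (ι : A →ₗ[ℂ] H)
    (hdense : DenseRange ι) (hinj : Function.Injective ι)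
    (hip : ∀ a b : A, (inner ℂ (ι b) (ι a) : ℂ) = t (star b * a))
    (ht1 : t 1 = 1) (htr : ∀ a b : A, t (a * b) = t (b * a))
    (lam : A → H →L[ℂ] H) (hlam : ∀ a b : A, lam a (ι b) = ι (a * b))
    (rho : A → H →L[ℂ] H) (hrho : ∀ a b : A, rho a (ι b) = ι (b * a))
    (J : H → H) (hJcont : Continuous J)
    (hJadd : ∀ ξ η : H, J (ξ + η) = J ξ + J η)
    (hJsmul : ∀ (c : ℂ) (ξ : H), J (c • ξ) = (starRingEnd ℂ) c • J ξ)
    (hJinvol : ∀ ξ : H, J (J ξ) = ξ)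
    (hJ : ∀ a : A, J (ι a) = ι (star a)) :
    (∀ x' ∈ Set.centralizer (Set.centralizer (Set.centralizer (Set.range lam))),
        J (x' (ι 1)) = (star x') (ι 1)) ∧
    (∀ x' ∈ Set.centralizer (Set.centralizer (Set.centralizer (Set.range rho))),
        J (x' (ι 1)) = (star x') (ι 1)) := by
  -- J is "anti-unitary": ⟪J ξ, J η⟫ = ⟪η, ξ⟫
  have hiso : ∀ ξ η : H, (inner ℂ (J ξ) (J η) : ℂ) = inner ℂ η ξ := by
    intro ξ η
    refine DenseRange.induction_on₂ hdense (p := fun ξ η => (inner ℂ (J ξ) (J η) : ℂ) = inner ℂ η ξ)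
      ?_ ?_ ξ η
    · apply isClosed_eq
      · exact Continuous.inner (hJcont.comp continuous_fst) (hJcont.comp continuous_snd)
      · exact Continuous.inner continuous_snd continuous_fst
    · intro a b
      rw [hJ, hJ, hip, hip, star_star, htr]
  have hdense' : Dense ((LinearMap.range ι : Submodule ℂ H) : Set H) := by
    simpa [LinearMap.coe_range, DenseRange] using hdense
  -- key lemma for a representation π with π a (ι b) = ι (f a b)
  have key : ∀ (pi : A → H →L[ℂ] H), (∀ a : A, pi a (ι 1) = ι a) →
      (∀ (a : A) (ξ : H), (inner ℂ (pi (star a) ξ) (ι 1) : ℂ) = inner ℂ ξ (ι a)) →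
      ∀ x' ∈ Set.centralizer (Set.centralizer (Set.centralizer (Set.range pi))),
        J (x' (ι 1)) = (star x') (ι 1) := by
    intro pi h1 hadj x' hx'
    -- x' commutes with each pi a
    have hcomm : ∀ a : A, pi a * x' = x' * pi a := by
      intro a
      have hmem : pi a ∈ Set.centralizer (Set.centralizer (Set.range pi)) :=
        Set.subset_centralizer_centralizer ⟨a, rfl⟩
      exact (hx' (pi a) hmem)
    refine hdense'.eq_of_inner_left ℂ ?_
    rintro _ ⟨b, rfl⟩
    show (inner ℂ (J (x' (ι 1))) (ι b) : ℂ) = inner ℂ ((star x') (ι 1)) (ι b)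
    have hxb : x' (ι b) = pi b (x' (ι 1)) := by
      have := congrFun (congrArg (fun T : H →L[ℂ] H => (T : H → H)) (hcomm b)) (ι 1)
      simpa [ContinuousLinearMap.mul_apply, h1 b] using this.symm
    calc (inner ℂ (J (x' (ι 1))) (ι b) : ℂ)
        = inner ℂ (J (x' (ι 1))) (J (ι (star b))) := by rw [hJ, star_star]
      _ = inner ℂ (ι (star b)) (x' (ι 1)) := hiso _ _
      _ = (starRingEnd ℂ) (inner ℂ (x' (ι 1)) (ι (star b))) := (inner_conj_symm _ _).symm
      _ = (starRingEnd ℂ) (inner ℂ (pi (star (star b)) (x' (ι 1))) (ι 1)) := by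
            rw [hadj (star b) (x' (ι 1))]
      _ = (starRingEnd ℂ) (inner ℂ (x' (ι b)) (ι 1)) := by rw [star_star, hxb]
      _ = inner ℂ (ι 1) (x' (ι b)) := inner_conj_symm _ _
      _ = inner ℂ ((star x') (ι 1)) (ι b) := by
            rw [ContinuousLinearMap.star_eq_adjoint, ContinuousLinearMap.adjoint_inner_left]
  constructor
  · refine key lam (fun a => by rw [hlam, mul_one]) ?_
    intro a ξ
    refine DenseRange.induction_on hdense ξ ?_ ?_
    · apply isClosed_eq
      · exact Continuous.inner ((lam (star a)).continuous) continuous_const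
      · exact Continuous.inner continuous_id continuous_const
    · intro b
      rw [hlam, hip, hip, star_mul, star_star, mul_one, htr]
  · refine key rho (fun a => by rw [hrho, one_mul]) ?_
    intro a ξ
    refine DenseRange.induction_on hdense ξ ?_ ?_
    · apply isClosed_eq
      · exact Continuous.inner ((rho (star a)).continuous) continuous_const
      · exact Continuous.inner continuous_id continuous_const
    · intro b
      rw [hrho, hip, hip, star_mul, star_star, mul_one, htr]
end

section
/- Let H be a Hilbert space, M ⊆ B(H) a von Neumann algebra with cyclic separating vector Ω and modular conjugation J satisfying JxΩ = x*Ω for all x ∈ M and Jx'Ω = x'*Ω for all x' ∈ M'. Then J M J = M'. -/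
noncomputable def conjOp {H : Type*} [NormedAddCommGroup H] [InnerProductSpace ℂ H]
    (J : H → H) (hJcont : Continuous J)
    (hJadd : ∀ ξ η : H, J (ξ + η) = J ξ + J η)
    (hJsmul : ∀ (c : ℂ) (ξ : H), J (c • ξ) = (starRingEnd ℂ) c • J ξ)
    (T : H →L[ℂ] H) : H →L[ℂ] H where
  toFun ξ := J (T (J ξ))
  map_add' ξ η := by show J (T (J (ξ + η))) = _; rw [hJadd, map_add, hJadd]
  map_smul' c ξ := by
    show J (T (J (c • ξ))) = _
    rw [hJsmul, map_smul, hJsmul]; simp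
  cont := hJcont.comp (T.continuous.comp hJcont)

/-- Let `M` be a von Neumann algebra (a unital self-adjoint subset of `B(H)` equal to
its double commutant) with cyclic and separating vector `Ω`, and let `J` be a
conjugate-linear isometric involution on `H` with `J = J* = J⁻¹`, satisfying
`J x Ω = x* Ω` for all `x ∈ M` and `J x' Ω = x'* Ω` for all `x'` in the commutant of
`M`.  Then `J M J = M'`. -/
theorem stmt19 (H : Type*) [NormedAddCommGroup H] [InnerProductSpace ℂ H] [CompleteSpace H]
    (M : Set (H →L[ℂ] H))
    (hM : Set.centralizer (Set.centralizer M) = M)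
    (hMstar : ∀ x ∈ M, star x ∈ M)
    (hM1 : (1 : H →L[ℂ] H) ∈ M)
    (Ω : H)
    (hcyc : Dense ((fun x : H →L[ℂ] H => x Ω) '' M))
    (hsep : ∀ x ∈ M, x Ω = 0 → x = 0)
    (J : H → H) (hJcont : Continuous J)
    (hJadd : ∀ ξ η : H, J (ξ + η) = J ξ + J η)
    (hJsmul : ∀ (c : ℂ) (ξ : H), J (c • ξ) = (starRingEnd ℂ) c • J ξ)
    (hJinvol : ∀ ξ : H, J (J ξ) = ξ)
    (hJadj : ∀ ξ η : H, (inner ℂ (J ξ) η : ℂ) = inner ℂ (J η) ξ)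
    (hJM : ∀ x ∈ M, J (x Ω) = (star x) Ω)
    (hJM' : ∀ x' ∈ Set.centralizer M, J (x' Ω) = (star x') Ω) :
    {y : H →L[ℂ] H | ∃ x ∈ M, ∀ ξ : H, y ξ = J (x (J ξ))} = Set.centralizer M := by
  set K : (H →L[ℂ] H) → (H →L[ℂ] H) := conjOp J hJcont hJadd hJsmul with hKdef
  have hK : ∀ (T : H →L[ℂ] H) (ξ : H), K T ξ = J (T (J ξ)) := fun _ _ => rfl
  -- J after T equals K T after J
  have hJT : ∀ (T : H →L[ℂ] H) (η : H), J (T η) = K T (J η) := by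
    intro T η; rw [hK, hJinvol]
  -- closure properties
  have hMmul : ∀ a ∈ M, ∀ b ∈ M, a * b ∈ M := by
    intro a ha b hb
    have ha' : a ∈ Set.centralizer (Set.centralizer M) := by rw [hM]; exact ha
    have hb' : b ∈ Set.centralizer (Set.centralizer M) := by rw [hM]; exact hb
    rw [← hM]; exact Set.mul_mem_centralizer ha' hb'
  have hM'mul : ∀ a ∈ Set.centralizer M, ∀ b ∈ Set.centralizer M,
      a * b ∈ Set.centralizer M := fun a ha b hb => Set.mul_mem_centralizer ha hb
  have hM'star : ∀ c ∈ Set.centralizer M, star c ∈ Set.centralizer M := by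
    intro c hc
    rw [Set.mem_centralizer_iff]
    intro m hm
    have h1 : star m * c = c * star m := hc (star m) (hMstar m hm)
    calc m * star c = star (c * star m) := by rw [star_mul, star_star]
      _ = star (star m * c) := by rw [h1]
      _ = star c * m := by rw [star_mul, star_star]
  -- extensionality from the dense set M Ω
  have hext : ∀ f g : H →L[ℂ] H, (∀ b ∈ M, f (b Ω) = g (b Ω)) → f = g := by
    intro f g h
    ext ξ
    have h2 := Continuous.ext_on hcyc f.continuous g.continuous
      (by rintro _ ⟨b, hb, rfl⟩; exact h b hb)
    exact congrFun h2 ξ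
  -- Step A : J M J ⊆ M'
  have hKM : ∀ x ∈ M, K x ∈ Set.centralizer M := by
    intro x hx
    rw [Set.mem_centralizer_iff]
    intro a ha
    apply hext
    intro b hb
    have hab : a * b ∈ M := hMmul a ha b hb
    have h1 : (a * K x) (b Ω) = (a * (b * star x)) Ω := by
      calc (a * K x) (b Ω) = a (J (x (J (b Ω)))) := rfl
        _ = a (J ((x * star b) Ω)) := by rw [hJM b hb]; rfl
        _ = a ((star (x * star b)) Ω) := by
              rw [hJM _ (hMmul x hx _ (hMstar b hb))]
        _ = (a * (b * star x)) Ω := by rw [star_mul, star_star]; rfl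
    have h2 : (K x * a) (b Ω) = ((a * b) * star x) Ω := by
      calc (K x * a) (b Ω) = J (x (J ((a * b) Ω))) := rfl
        _ = J ((x * star (a * b)) Ω) := by rw [hJM _ hab]; rfl
        _ = (star (x * star (a * b))) Ω := hJM _ (hMmul x hx _ (hMstar _ hab))
        _ = ((a * b) * star x) Ω := by rw [star_mul, star_star]
    rw [h1, h2, ← mul_assoc]
  -- Step B : star (K T) = K (star T)
  have hKstar : ∀ T : H →L[ℂ] H, star (K T) = K (star T) := by
    intro T
    rw [ContinuousLinearMap.star_eq_adjoint]
    symm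
    rw [ContinuousLinearMap.eq_adjoint_iff]
    intro ξ η
    calc (inner ℂ ((K (star T)) ξ) η : ℂ)
        = inner ℂ (J ((star T) (J ξ))) η := rfl
      _ = inner ℂ (J η) ((star T) (J ξ)) := hJadj _ _
      _ = inner ℂ (T (J η)) (J ξ) := by
            rw [ContinuousLinearMap.star_eq_adjoint,
              ContinuousLinearMap.adjoint_inner_right]
      _ = inner ℂ (J (J (T (J η)))) (J ξ) := by rw [hJinvol]
      _ = inner ℂ (J (J ξ)) (J (T (J η))) := hJadj _ _
      _ = inner ℂ ξ ((K T) η) := by rw [hJinvol]; rfl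
  -- Step C : J M' J ⊆ M'' = M
  have hKM' : ∀ y ∈ Set.centralizer M, K y ∈ M := by
    intro y hy
    rw [← hM, Set.mem_centralizer_iff]
    intro a ha
    apply hext
    intro b hb
    have hKb : K b ∈ Set.centralizer M := hKM b hb
    have hyb : y ((star b) Ω) = (star b) (y Ω) := by
      calc y ((star b) Ω) = (y * star b) Ω := rfl
        _ = (star b * y) Ω := by rw [hy (star b) (hMstar b hb)]
        _ = (star b) (y Ω) := rfl
    have h1 : (a * K y) (b Ω) = (a * (K (star b) * star y)) Ω := by
      calc (a * K y) (b Ω) = a (J (y (J (b Ω)))) := rfl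
        _ = a (J (y ((star b) Ω))) := by rw [hJM b hb]
        _ = a (J ((star b) (y Ω))) := by rw [hyb]
        _ = a ((K (star b)) (J (y Ω))) := by rw [hJT (star b) (y Ω)]
        _ = a ((K (star b)) ((star y) Ω)) := by rw [hJM' y hy]
        _ = (a * (K (star b) * star y)) Ω := rfl
    have hab : a (b Ω) = b (a Ω) := by
      calc a (b Ω) = (b * a) Ω := (congrArg (fun z => z Ω) (ha b hb)).symm
        _ = b (a Ω) := rfl
    have hmem : y * K b * star a ∈ Set.centralizer M :=
      hM'mul _ (hM'mul y hy _ hKb) _ (hM'star a ha)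
    have h2 : (K y * a) (b Ω) = (a * (K (star b) * star y)) Ω := by
      calc (K y * a) (b Ω) = J (y (J (a (b Ω)))) := rfl
        _ = J (y (J (b (a Ω)))) := by rw [hab]
        _ = J (y ((K b) (J (a Ω)))) := by rw [hJT b (a Ω)]
        _ = J (y ((K b) ((star a) Ω))) := by rw [hJM' a ha]
        _ = J ((y * K b * star a) Ω) := rfl
        _ = (star (y * K b * star a)) Ω := hJM' _ hmem
        _ = (a * (K (star b) * star y)) Ω := by
              rw [star_mul, star_mul, star_star, hKstar]
    rw [h1, h2]
  -- conclusion
  ext y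
  simp only [Set.mem_setOf_eq]
  constructor
  · rintro ⟨x, hx, hxy⟩
    have hyK : y = K x := by
      apply ContinuousLinearMap.ext
      intro ξ
      rw [hxy ξ]; rfl
    rw [hyK]; exact hKM x hx
  · intro hy
    refine ⟨K y, hKM' y hy, fun ξ => ?_⟩
    rw [hK, hJinvol, hJinvol]
end
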